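/- arXiv:math/0504205 — 6 statements merged into one kernel-verified Lean document; each statement's English description precedes it below -/
import Mathlib

section
/- Theorem 4: Let G be a representable Menger (2,n)-semigroup and let χ, π be binary relations on G. The following are equivalent: (i) the pair (χ, π) is projection representable for G; (ii) the pair (χ, π) is faithfully projection representable for G; (iii) χ is an l-regular and v-negative quasi-order and π = χ ∩ χ⁻¹. -/
universe u

/-- A partial `n`-place function on `A` (`none` = undefined). -/
abbrev NPlace (A : Type u) (n : ℕ) := (Fin n → A) → Option A

/-- The domain of a partial `n`-place function. -/
def pdom {A : Type u} {n : ℕ} (f : NPlace A n) : Set (Fin n → A) :=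
  {a | (f a).isSome}

/-- Superposition `f[g₁…gₙ]` of partial `n`-place functions. -/
def superpose {A : Type u} {n : ℕ} (f : NPlace A n) (g : Fin n → NPlace A n) : NPlace A n :=
  fun a => if h : ∀ i, (g i a).isSome then f (fun i => (g i a).get (h i)) else none

/-- The binary composition `f ∘ᵢ g` of partial `n`-place functions. -/
def opc {A : Type u} {n : ℕ} (i : Fin n) (f g : NPlace A n) : NPlace A n :=
  fun a => (g a).bind fun b => f (Function.update a i b)

/-- A Menger (2,n)-semigroup: an (n+1)-ary superassociative operation `sup`
(written `x[y₁…yₙ]`) together with `n` associative binary operations `op i`. -/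
structure MengerSg (G : Type u) (n : ℕ) where
  sup : G → (Fin n → G) → G
  op : Fin n → G → G → G
  superassoc : ∀ (x : G) (y z : Fin n → G),
    sup (sup x y) z = sup x fun i => sup (y i) z
  op_assoc : ∀ (i : Fin n) (x y z : G), op i (op i x y) z = op i x (op i y z)

namespace MengerSg

variable {G : Type u} {n : ℕ}

/-- Applying a composition string `L = [(i₁,y₁),…,(i_s,y_s)]` to `x`:
`x ∘_{i₁} y₁ ∘_{i₂} y₂ ⋯ ∘_{i_s} y_s` (left to right). -/
def applyStr (M : MengerSg G n) (x : G) (L : List (Fin n × G)) : G :=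
  L.foldl (fun a p => M.op p.1 a p.2) x

/-- `μᵢ(L)`: if `i` occurs in the composition string `L` with least position `k`,
this is `some (yₖ ∘_{i_{k+1}} y_{k+1} ⋯ ∘_{i_s} y_s)`; otherwise `none`. -/
def mu (M : MengerSg G n) (i : Fin n) : List (Fin n × G) → Option G
  | [] => none
  | p :: rest => if p.1 = i then some (applyStr M p.2 rest) else mu M i rest

/-- Conditions (4)–(7): the Menger (2,n)-semigroup is representable. -/
def Representable (M : MengerSg G n) : Prop :=
  (∀ L₁ L₂ : List (Fin n × G), L₁ ≠ [] → L₂ ≠ [] →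
      (∀ i, mu M i L₁ = mu M i L₂) → ∀ g, applyStr M g L₁ = applyStr M g L₂) ∧
  (∀ (i : Fin n) (x y : G) (z : Fin n → G),
      M.sup (M.op i x y) z = M.sup x (Function.update z i (M.sup y z))) ∧
  (∀ (i : Fin n) (x : G) (y : Fin n → G) (z : G),
      M.op i (M.sup x y) z = M.sup x fun j => M.op i (y j) z) ∧
  (∀ L : List (Fin n × G), L ≠ [] → ∀ m : Fin n → G,
      (∀ i, mu M i L = some (m i)) → ∀ x, applyStr M x L = M.sup x m)

/-- A binary relation is l-regular. -/
def LRegular (M : MengerSg G n) (r : G → G → Prop) : Prop :=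
  ∀ x y, r x y →
    (∀ z : Fin n → G, r (M.sup x z) (M.sup y z)) ∧
    (∀ (i : Fin n) (z : G), r (M.op i x z) (M.op i y z))

/-- A binary relation is l-cancellative. -/
def LCancellative (M : MengerSg G n) (r : G → G → Prop) : Prop :=
  (∀ (x y : G) (z : Fin n → G), r (M.sup x z) (M.sup y z) → r x y) ∧
  (∀ (x y : G) (i : Fin n) (z : G), r (M.op i x z) (M.op i y z) → r x y)

/-- A binary relation is v-negative. -/
def VNegative (M : MengerSg G n) (r : G → G → Prop) : Prop :=
  (∀ (x : G) (y : Fin n → G) (i : Fin n), r (M.sup x y) (y i)) ∧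
  (∀ (x : G) (L : List (Fin n × G)), L ≠ [] →
      ∀ (j : Fin n) (m : G), mu M j L = some m → r (applyStr M x L) m)

/-- A quasi-order is a reflexive and transitive relation. -/
def QuasiOrder (r : G → G → Prop) : Prop := Reflexive r ∧ Transitive r

/-- `z` is a zero of the Menger (2,n)-semigroup. -/
def IsZero (M : MengerSg G n) (z : G) : Prop :=
  (∀ (i : Fin n) (g : G), M.op i z g = z ∧ M.op i g z = z) ∧
  (∀ g : Fin n → G, M.sup z g = z) ∧
  (∀ (g : G) (gs : Fin n → G) (i : Fin n), M.sup g (Function.update gs i z) = z)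

/-- A 0-quasi-equivalence: a symmetric relation which is reflexive at every non-zero
element, and such that any zero related to something is related to itself. -/
def ZeroQuasiEquiv (M : MengerSg G n) (r : G → G → Prop) : Prop :=
  Symmetric r ∧ (∀ g, ¬ M.IsZero g → r g g) ∧
  (∀ z, M.IsZero z → (∃ h, r z h) → r z z)

/-- `P` is a representation of the Menger (2,n)-semigroup by `n`-place functions. -/
def IsRep (M : MengerSg G n) {A : Type u} (P : G → NPlace A n) : Prop :=
  (∀ (x : G) (y : Fin n → G), P (M.sup x y) = superpose (P x) fun i => P (y i)) ∧
  (∀ (i : Fin n) (x y : G), P (M.op i x y) = opc i (P x) (P y))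

/-- The set `Tₙ(G)` of translations: the least set of maps `G → G` containing the
identity and closed under `t ↦ (x ↦ a[b₁…b_{i−1} t(x) b_{i+1}…bₙ])`. -/
inductive IsTransl (M : MengerSg G n) : (G → G) → Prop
  | id : IsTransl M _root_.id
  | step (t : G → G) (ht : IsTransl M t) (i : Fin n) (a : G) (b : Fin n → G) :
      IsTransl M fun x => M.sup a (Function.update b i (t x))

/-- The relation `δ₁`: `g₁ = t(g₂)` for some `t ∈ Tₙ(G)`. -/
def delta1 (M : MengerSg G n) : G → G → Prop :=
  fun g₁ g₂ => ∃ t : G → G, IsTransl M t ∧ g₁ = t g₂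

/-- The relation `δ₂`: `g₁ = (x∘_{i₁}y₁⋯∘_{i_s}y_s)` and `g₂ = μᵢ(L)`, possibly both
superposed with a common `z̄ ∈ Gⁿ`. -/
def delta2 (M : MengerSg G n) : G → G → Prop :=
  fun g₁ g₂ => ∃ (x : G) (L : List (Fin n × G)) (i : Fin n) (m : G),
    L ≠ [] ∧ mu M i L = some m ∧
    ((g₁ = applyStr M x L ∧ g₂ = m) ∨
      ∃ z : Fin n → G, g₁ = M.sup (applyStr M x L) z ∧ g₂ = M.sup m z)

/-- `χ(π)`: the transitive closure of `(δ₂ ∪ Δ_G) ∘ δ₁ ∘ π` (relations applied right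
to left in the paper's notation, i.e. first `π`, then `δ₁`, then `δ₂ ∪ Δ_G`). -/
def chiRel (M : MengerSg G n) (π : G → G → Prop) : G → G → Prop :=
  Relation.TransGen
    (Relation.Comp (Relation.Comp π (delta1 M)) fun a b => delta2 M a b ∨ a = b)

/-- `χ₀`: the transitive closure of `(δ₂ ∪ Δ_G) ∘ δ₁`. -/
def chi0 (M : MengerSg G n) : G → G → Prop :=
  Relation.TransGen
    (Relation.Comp (delta1 M) fun a b => delta2 M a b ∨ a = b)

end MengerSg

open MengerSg

namespace Th4

variable {G : Type u} {n : ℕ}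

lemma applyStr_cons (M : MengerSg G n) (x : G) (p : Fin n × G) (L : List (Fin n × G)) :
    M.applyStr x (p :: L) = M.applyStr (M.op p.1 x p.2) L := rfl

lemma applyStr_nil (M : MengerSg G n) (x : G) : M.applyStr x [] = x := rfl

lemma mu_cons (M : MengerSg G n) (i : Fin n) (p : Fin n × G) (L : List (Fin n × G)) :
    M.mu i (p :: L) = if p.1 = i then some (M.applyStr p.2 L) else M.mu i L := rfl

lemma mu_nil (M : MengerSg G n) (i : Fin n) : M.mu i [] = none := rfl

/-- homomorphism extended to strings -/
lemma foldlP {A : Type u} (M : MengerSg G n) (P : G → NPlace A n)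
    (h2 : ∀ (i : Fin n) (x y : G), P (M.op i x y) = opc i (P x) (P y)) :
    ∀ (L : List (Fin n × G)) (x : G),
      P (M.applyStr x L) = L.foldl (fun f p => opc p.1 f (P p.2)) (P x) := by
  intro L
  induction L with
  | nil => intro x; rfl
  | cons p rest ih =>
      intro x
      rw [applyStr_cons, ih, List.foldl_cons, h2]

lemma opc_isSome {A : Type u} {i : Fin n} {f g : NPlace A n} {a : Fin n → A}
    (h : (opc i f g a).isSome) :
    ∃ b, g a = some b ∧ (f (Function.update a i b)).isSome := by
  unfold opc at h
  cases hg : g a with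
  | none => rw [hg] at h; simp at h
  | some b => rw [hg] at h; exact ⟨b, rfl, h⟩

lemma domC {A : Type u} (M : MengerSg G n) (P : G → NPlace A n) :
    ∀ (L : List (Fin n × G)) (f f' : NPlace A n),
      (∀ b, (f b).isSome → (f' b).isSome) →
      ∀ a, ((L.foldl (fun h p => opc p.1 h (P p.2)) f) a).isSome →
        ((L.foldl (fun h p => opc p.1 h (P p.2)) f') a).isSome := by
  intro L
  induction L with
  | nil => intro f f' hff a; exact hff a
  | cons p rest ih =>
      intro f f' hff a h
      rw [List.foldl_cons] at h ⊢
      refine ih _ _ ?_ a h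
      intro b hb
      obtain ⟨c, hc, h'⟩ := opc_isSome hb
      unfold opc; rw [hc]; exact hff _ h'

/-- Easy direction -/
lemma easyDir {G : Type u} {n : ℕ} (hn : 1 ≤ n)
    (M : MengerSg G n) (χ π : G → G → Prop)
    {A : Type u} (P : G → NPlace A n) (hrep : M.IsRep P)
    (hχ : ∀ g₁ g₂, χ g₁ g₂ ↔ pdom (P g₁) ⊆ pdom (P g₂))
    (hπ : ∀ g₁ g₂, π g₁ g₂ ↔ pdom (P g₁) = pdom (P g₂)) :
    QuasiOrder χ ∧ M.LRegular χ ∧ M.VNegative χ ∧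
      ∀ a b, π a b ↔ χ a b ∧ χ b a := by
  have memdom : ∀ (f : NPlace A n) (a : Fin n → A), a ∈ pdom f ↔ (f a).isSome := by
    intro f a; rfl
  refine ⟨⟨?_, ?_⟩, ?_, ⟨?_, ?_⟩, ?_⟩
  · intro a; rw [hχ]
  · intro a b c hab hbc; rw [hχ] at *; exact hab.trans hbc
  · -- LRegular
    intro x y hxy
    rw [hχ] at hxy
    constructor
    · intro z
      rw [hχ, hrep.1, hrep.1]
      intro a ha
      rw [memdom] at ha ⊢
      unfold superpose at ha ⊢
      by_cases h : ∀ i, (P (z i) a).isSome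
      · rw [dif_pos h] at ha ⊢
        exact hxy ha
      · rw [dif_neg h] at ha; simp at ha
    · intro i z
      rw [hχ, hrep.2, hrep.2]
      intro a ha
      rw [memdom] at ha ⊢
      obtain ⟨b, hb, h'⟩ := opc_isSome ha
      unfold opc; rw [hb]
      exact hxy h'
  · -- VNegative clause 1
    intro x y i
    rw [hχ, hrep.1]
    intro a ha
    rw [memdom] at ha ⊢
    unfold superpose at ha
    by_cases h : ∀ j, (P (y j) a).isSome
    · exact h i
    · rw [dif_neg h] at ha; simp at ha
  · -- VNegative clause 2
    intro x L hL j m hmu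
    rw [hχ]
    clear hL
    induction L generalizing x with
    | nil => simp [mu_nil] at hmu
    | cons p rest ih =>
        rw [mu_cons] at hmu
        by_cases hp : p.1 = j
        · rw [if_pos hp] at hmu
          injection hmu with hm
          subst hm
          rw [applyStr_cons]
          intro a ha
          rw [memdom] at ha ⊢
          rw [foldlP M P hrep.2] at ha
          rw [foldlP M P hrep.2]
          rw [hrep.2] at ha
          refine domC M P rest _ _ ?_ a ha
          intro b hb
          obtain ⟨c, hc, _⟩ := opc_isSome hb
          rw [hc]; rfl
        · rw [if_neg hp] at hmu
          rw [applyStr_cons]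
          exact ih _ hmu
  · intro a b
    rw [hπ, hχ, hχ, Set.Subset.antisymm_iff]

/-! ### Hard direction: construction of the representation -/

def AllSome {α : Type u} (vt : Fin n → Option α) : Prop := ∀ i, (vt i).isSome

def AllNone {α : Type u} (vt : Fin n → Option α) : Prop := ∀ i, vt i = none

def RealV (M : MengerSg G n) (vt : Fin n → Option G) : Prop :=
  ∃ L, L ≠ [] ∧ ∀ i, M.mu i L = vt i

open Classical in
noncomputable def val (M : MengerSg G n) (g : G) (vt : Fin n → Option G) : Option G :=
  if h : AllSome vt then some (M.sup g fun i => (vt i).get (h i))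
  else if AllNone vt then some g
  else if h : RealV M vt then some (M.applyStr g h.choose) else none

lemma allNone_not_allSome (hn : 1 ≤ n) {vt : Fin n → Option G} (h : AllNone vt) :
    ¬ AllSome vt := by
  intro h'
  have := h' ⟨0, hn⟩
  rw [h ⟨0, hn⟩] at this
  simp at this

lemma realV_not_allNone {M : MengerSg G n} {vt : Fin n → Option G} (h : RealV M vt) :
    ¬ AllNone vt := by
  obtain ⟨L, hL, hμ⟩ := h
  cases L with
  | nil => exact absurd rfl hL
  | cons p rest =>
      intro hAN
      have := hμ p.1
      rw [mu_cons, if_pos rfl, hAN p.1] at this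
      exact nomatch this

lemma val_allSome {M : MengerSg G n} {vt : Fin n → Option G} (h : AllSome vt) (g : G) :
    val M g vt = some (M.sup g fun i => (vt i).get (h i)) := dif_pos h

lemma val_allNone {M : MengerSg G n} (hn : 1 ≤ n) {vt : Fin n → Option G}
    (h : AllNone vt) (g : G) : val M g vt = some g := by
  unfold val
  rw [dif_neg (allNone_not_allSome hn h), if_pos h]

lemma val_someTuple {M : MengerSg G n} (g : G) (w : Fin n → G) :
    val M g (fun i => some (w i)) = some (M.sup g w) := by
  have h : AllSome (fun i => some (w i)) := fun i => rfl
  rw [val_allSome h]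
  simp

lemma val_of_string {M : MengerSg G n} (hM : M.Representable) {vt : Fin n → Option G}
    {L : List (Fin n × G)} (hL : L ≠ []) (hμ : ∀ i, M.mu i L = vt i) (g : G) :
    val M g vt = some (M.applyStr g L) := by
  by_cases hAS : AllSome vt
  · rw [val_allSome hAS]
    have hmu' : ∀ i, M.mu i L = some ((vt i).get (hAS i)) := by
      intro i; rw [hμ i]; exact (Option.some_get (hAS i)).symm
    rw [hM.2.2.2 L hL _ hmu' g]
  · have hR : RealV M vt := ⟨L, hL, hμ⟩
    unfold val
    rw [dif_neg hAS, if_neg (realV_not_allNone hR), dif_pos hR]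
    congr 1
    exact hM.1 hR.choose L hR.choose_spec.1 hL
      (fun i => (hR.choose_spec.2 i).trans (hμ i).symm) g

lemma val_none {M : MengerSg G n} {vt : Fin n → Option G}
    (hAS : ¬ AllSome vt) (hAN : ¬ AllNone vt) (hR : ¬ RealV M vt) (g : G) :
    val M g vt = none := by
  unfold val
  rw [dif_neg hAS, if_neg hAN, dif_neg hR]

/-- the domain of `val` does not depend on `g` -/
lemma val_dom {M : MengerSg G n} (hn : 1 ≤ n) (hM : M.Representable)
    {vt : Fin n → Option G} {g : G} (h : (val M g vt).isSome) (g' : G) :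
    (val M g' vt).isSome := by
  by_cases hAS : AllSome vt
  · rw [val_allSome hAS]; rfl
  · by_cases hAN : AllNone vt
    · rw [val_allNone hn hAN]; rfl
    · by_cases hR : RealV M vt
      · rw [val_of_string hM hR.choose_spec.1 hR.choose_spec.2]; rfl
      · rw [val_none hAS hAN hR] at h; exact absurd h (by simp)

lemma applyStr_sup {M : MengerSg G n} (hM : M.Representable) :
    ∀ (L : List (Fin n × G)) (x : G) (y : Fin n → G),
      M.applyStr (M.sup x y) L = M.sup x (fun j => M.applyStr (y j) L) := by
  intro L
  induction L with
  | nil => intro x y; rfl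
  | cons p rest ih =>
      intro x y
      rw [applyStr_cons, hM.2.2.1, ih]
      rfl

lemma applyStr_lreg {M : MengerSg G n} {χ : G → G → Prop} (hl : M.LRegular χ) :
    ∀ (L : List (Fin n × G)) (x y : G), χ x y →
      χ (M.applyStr x L) (M.applyStr y L) := by
  intro L
  induction L with
  | nil => intro x y h; exact h
  | cons p rest ih =>
      intro x y h
      rw [applyStr_cons, applyStr_cons]
      exact ih _ _ ((hl x y h).2 p.1 p.2)

lemma val_mono {M : MengerSg G n} {χ : G → G → Prop} (hn : 1 ≤ n)
    (hl : M.LRegular χ) {g₁ g₂ : G} (hχ : χ g₁ g₂) {vt : Fin n → Option G}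
    {v₁ v₂ : G} (h1 : val M g₁ vt = some v₁) (h2 : val M g₂ vt = some v₂) :
    χ v₁ v₂ := by
  by_cases hAS : AllSome vt
  · rw [val_allSome hAS] at h1 h2
    injection h1 with h1; injection h2 with h2
    subst h1; subst h2
    exact (hl g₁ g₂ hχ).1 _
  · by_cases hAN : AllNone vt
    · rw [val_allNone hn hAN] at h1 h2
      injection h1 with h1; injection h2 with h2
      subst h1; subst h2; exact hχ
    · by_cases hR : RealV M vt
      · unfold val at h1 h2
        rw [dif_neg hAS, if_neg hAN, dif_pos hR] at h1 h2
        injection h1 with h1; injection h2 with h2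
        subst h1; subst h2
        exact applyStr_lreg hl _ _ _ hχ
      · rw [val_none hAS hAN hR] at h1; exact absurd h1 (by simp)

lemma val_sup_some {M : MengerSg G n} (hn : 1 ≤ n) (hM : M.Representable)
    {vt : Fin n → Option G} {y : Fin n → G} {w : Fin n → G}
    (h : ∀ i, val M (y i) vt = some (w i)) (x : G) :
    val M (M.sup x y) vt = some (M.sup x w) := by
  by_cases hAS : AllSome vt
  · rw [val_allSome hAS]
    have hw : ∀ i, w i = M.sup (y i) (fun j => (vt j).get (hAS j)) := by
      intro i
      have := h i
      rw [val_allSome hAS] at this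
      exact (Option.some_inj.mp this).symm
    rw [M.superassoc]
    have : (fun i => M.sup (y i) fun j => (vt j).get (hAS j)) = w := by
      funext i; rw [hw i]
    rw [this]
  · by_cases hAN : AllNone vt
    · rw [val_allNone hn hAN]
      have hw : ∀ i, w i = y i := by
        intro i
        have := h i
        rw [val_allNone hn hAN] at this
        exact (Option.some_inj.mp this).symm
      have : y = w := by funext i; rw [hw i]
      rw [this]
    · by_cases hR : RealV M vt
      · obtain ⟨L, hL, hμ⟩ := hR
        rw [val_of_string hM hL hμ]
        have hw : ∀ i, w i = M.applyStr (y i) L := by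
          intro i
          have := h i
          rw [val_of_string hM hL hμ] at this
          exact (Option.some_inj.mp this).symm
        rw [applyStr_sup hM]
        have : (fun j => M.applyStr (y j) L) = w := by
          funext i; rw [hw i]
        rw [this]
      · have := h ⟨0, hn⟩
        rw [val_none hAS hAN hR] at this
        exact absurd this (by simp)

lemma val_sup_none {M : MengerSg G n} (hn : 1 ≤ n) (hM : M.Representable)
    {vt : Fin n → Option G} {y : Fin n → G} {i : Fin n}
    (h : val M (y i) vt = none) (x : G) :
    val M (M.sup x y) vt = none := by
  cases hv : val M (M.sup x y) vt with
  | none => rfl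
  | some v =>
      have : (val M (y i) vt).isSome :=
        val_dom hn hM (g := M.sup x y) (by rw [hv]; rfl) (y i)
      rw [h] at this
      exact absurd this (by simp)

lemma val_op_some {M : MengerSg G n} {χ : G → G → Prop} (hn : 1 ≤ n)
    (hM : M.Representable) (hv : M.VNegative χ)
    {vt : Fin n → Option G} {y u : G} (i : Fin n)
    (h : val M y vt = some u) (x : G) :
    ∃ v, val M (M.op i x y) vt = some v ∧
      val M x (Function.update vt i (some u)) = some v ∧ χ v u := by
  by_cases hAS : AllSome vt
  · set m : Fin n → G := fun j => (vt j).get (hAS j) with hm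
    have hu : u = M.sup y m := by
      have := h; rw [val_allSome hAS] at this
      exact (Option.some_inj.mp this).symm
    have hAS' : AllSome (Function.update vt i (some u)) := by
      intro j
      by_cases hj : j = i
      · subst hj; rw [Function.update_self]; rfl
      · rw [Function.update_of_ne hj]; exact hAS j
    refine ⟨M.sup x (Function.update m i u), ?_, ?_, ?_⟩
    · rw [val_allSome hAS, hu, ← hM.2.1]
    · rw [val_allSome hAS']
      have : (fun j => (Function.update vt i (some u) j).get (hAS' j))
          = Function.update m i u := by
        funext j
        by_cases hj : j = i
        · subst hj; simp
        · apply Option.some_injective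
          rw [Option.some_get, Function.update_of_ne hj, Function.update_of_ne hj]
          exact (Option.some_get (hAS j)).symm
      rw [this]
    · have := hv.1 x (Function.update m i u) i
      rwa [Function.update_self] at this
  · by_cases hAN : AllNone vt
    · have hu : u = y := by
        have := h; rw [val_allNone hn hAN] at this
        exact (Option.some_inj.mp this).symm
      subst hu
      have hμ : ∀ j, M.mu j [(i, u)] = Function.update vt i (some u) j := by
        intro j
        rw [mu_cons, mu_nil]
        by_cases hj : i = j
        · subst hj; rw [if_pos rfl, Function.update_self, applyStr_nil]
        · rw [if_neg hj, Function.update_of_ne (Ne.symm hj), hAN j]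
      refine ⟨M.op i x u, val_allNone hn hAN _, ?_, ?_⟩
      · rw [val_of_string hM (by simp) hμ x, applyStr_cons, applyStr_nil]
      · have := hv.2 x [(i, u)] (by simp) i u
          (by rw [mu_cons, if_pos rfl, applyStr_nil])
        rwa [applyStr_cons, applyStr_nil] at this
    · by_cases hR : RealV M vt
      · obtain ⟨L, hL, hμ⟩ := hR
        have hu : u = M.applyStr y L := by
          have := h; rw [val_of_string hM hL hμ] at this
          exact (Option.some_inj.mp this).symm
        have hμ' : ∀ j, M.mu j ((i, y) :: L) = Function.update vt i (some u) j := by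
          intro j
          rw [mu_cons]
          by_cases hj : i = j
          · subst hj; rw [if_pos rfl, Function.update_self, hu]
          · rw [if_neg hj, Function.update_of_ne (Ne.symm hj), hμ j]
        refine ⟨M.applyStr x ((i, y) :: L), ?_, ?_, ?_⟩
        · rw [applyStr_cons]
          exact val_of_string hM hL hμ _
        · rw [val_of_string hM (by simp) hμ' x]
        · exact hu ▸ hv.2 x ((i, y) :: L) (by simp) i (M.applyStr y L)
            (by rw [mu_cons, if_pos rfl])
      · rw [val_none hAS hAN hR] at h
        exact absurd h (by simp)

lemma val_op_none {M : MengerSg G n} (hn : 1 ≤ n) (hM : M.Representable)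
    {vt : Fin n → Option G} {y : G} (i : Fin n)
    (h : val M y vt = none) (x : G) :
    val M (M.op i x y) vt = none := by
  cases hv : val M (M.op i x y) vt with
  | none => rfl
  | some v =>
      have : (val M y vt).isSome :=
        val_dom hn hM (g := M.op i x y) (by rw [hv]; rfl) y
      rw [h] at this
      exact absurd this (by simp)

open Classical in
noncomputable def val2 (M : MengerSg G n) (χ : G → G → Prop) (a g : G)
    (vt : Fin n → Option G) : Option G :=
  (val M g vt).bind fun v => if χ a v then some v else none

open Classical in
lemma val2_eq_some {M : MengerSg G n} {χ : G → G → Prop} {a g : G}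
    {vt : Fin n → Option G} {v : G} :
    val2 M χ a g vt = some v ↔ val M g vt = some v ∧ χ a v := by
  unfold val2
  cases h : val M g vt with
  | none => simp
  | some w =>
      simp only [Option.bind_some]
      by_cases hw : χ a w
      · rw [if_pos hw]
        constructor
        · intro he; injection he with he; subst he; exact ⟨rfl, hw⟩
        · intro ⟨h1, _⟩; injection h1 with h1; subst h1; rfl
      · rw [if_neg hw]
        constructor
        · intro he; exact absurd he (by simp)
        · intro ⟨h1, h2⟩; injection h1 with h1; subst h1; exact absurd h2 hw

lemma val2_isSome {M : MengerSg G n} {χ : G → G → Prop} {a g : G}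
    {vt : Fin n → Option G} :
    (val2 M χ a g vt).isSome ↔ ∃ v, val M g vt = some v ∧ χ a v := by
  constructor
  · intro h
    obtain ⟨v, hv⟩ := Option.isSome_iff_exists.mp h
    exact ⟨v, val2_eq_some.mp hv⟩
  · intro ⟨v, h1, h2⟩
    rw [Option.isSome_iff_exists]
    exact ⟨v, val2_eq_some.mpr ⟨h1, h2⟩⟩

lemma val2_eq_none {M : MengerSg G n} {χ : G → G → Prop} {a g : G}
    {vt : Fin n → Option G} :
    val2 M χ a g vt = none ↔ ∀ v, val M g vt = some v → ¬ χ a v := by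
  constructor
  · intro h v hv hav
    rw [val2_eq_some.mpr ⟨hv, hav⟩] at h
    exact nomatch h
  · intro h
    cases h2 : val2 M χ a g vt with
    | none => rfl
    | some v =>
        obtain ⟨h1, hav⟩ := val2_eq_some.mp h2
        exact absurd hav (h v h1)

lemma val2_sup {M : MengerSg G n} {χ : G → G → Prop} (hn : 1 ≤ n)
    (hM : M.Representable) (htr : Transitive χ) (hv : M.VNegative χ)
    (a x : G) (y : Fin n → G) (vt : Fin n → Option G) :
    val2 M χ a (M.sup x y) vt =
      if h : ∀ i, (val2 M χ a (y i) vt).isSome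
      then val2 M χ a x (fun i => some ((val2 M χ a (y i) vt).get (h i)))
      else none := by
  by_cases h : ∀ i, (val2 M χ a (y i) vt).isSome
  · rw [dif_pos h]
    obtain ⟨w, hw⟩ : ∃ w : Fin n → G, ∀ i,
        val M (y i) vt = some (w i) ∧ χ a (w i) := by
      refine ⟨fun i => (val2 M χ a (y i) vt).get (h i), fun i => ?_⟩
      exact val2_eq_some.mp (Option.some_get (h i)).symm
    have htup : (fun i => some ((val2 M χ a (y i) vt).get (h i)))
        = fun i => some (w i) := by
      funext i
      apply congrArg
      apply Option.some_injective
      rw [Option.some_get]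
      exact val2_eq_some.mpr (hw i)
    rw [htup]
    have hL : val M (M.sup x y) vt = some (M.sup x w) :=
      val_sup_some hn hM (fun i => (hw i).1) x
    have hR : val M x (fun i => some (w i)) = some (M.sup x w) :=
      val_someTuple x w
    unfold val2
    rw [hL, hR]
  · rw [dif_neg h]
    push_neg at h
    obtain ⟨i₀, hi₀⟩ := h
    replace hi₀ : val2 M χ a (y i₀) vt = none :=
      Option.not_isSome_iff_eq_none.mp hi₀
    cases hy : val M (y i₀) vt with
    | none =>
        rw [val2_eq_none]
        intro v hv' _
        rw [val_sup_none hn hM hy x] at hv'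
        exact nomatch hv'
    | some w₀ =>
        have hnw : ¬ χ a w₀ := val2_eq_none.mp hi₀ w₀ hy
        have hall : ∀ i, (val M (y i) vt).isSome := by
          intro i
          exact val_dom hn hM (g := y i₀) (by rw [hy]; rfl) (y i)
        set w : Fin n → G := fun i => (val M (y i) vt).get (hall i) with hwdef
        have hsome : ∀ i, val M (y i) vt = some (w i) :=
          fun i => (Option.some_get (hall i)).symm
        have hw₀ : w i₀ = w₀ := by
          have := hsome i₀; rw [hy] at this
          exact (Option.some_inj.mp this).symm
        have hL : val M (M.sup x y) vt = some (M.sup x w) :=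
          val_sup_some hn hM hsome x
        rw [val2_eq_none]
        intro v hv' hav
        rw [hL] at hv'
        injection hv' with hv'
        subst hv'
        exact hnw (htr hav (hw₀ ▸ hv.1 x w i₀))

lemma val2_op {M : MengerSg G n} {χ : G → G → Prop} (hn : 1 ≤ n)
    (hM : M.Representable) (htr : Transitive χ) (hv : M.VNegative χ)
    (a x y : G) (i : Fin n) (vt : Fin n → Option G) :
    val2 M χ a (M.op i x y) vt =
      (val2 M χ a y vt).bind fun u => val2 M χ a x (Function.update vt i (some u)) := by
  cases h2 : val2 M χ a y vt with
  | none =>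
      rw [Option.bind_none]
      cases hy : val M y vt with
      | none =>
          rw [val2_eq_none]
          intro v hv' _
          rw [val_op_none hn hM i hy x] at hv'
          exact nomatch hv'
      | some u =>
          have hnu : ¬ χ a u := val2_eq_none.mp h2 u hy
          obtain ⟨v, hv1, _, hv3⟩ := val_op_some hn hM hv i hy x
          rw [val2_eq_none]
          intro v' hv' hav
          rw [hv1] at hv'
          injection hv' with hv'
          subst hv'
          exact hnu (htr hav hv3)
  | some u =>
      rw [Option.bind_some]
      obtain ⟨hy, hau⟩ := val2_eq_some.mp h2
      obtain ⟨v, hv1, hv2, hv3⟩ := val_op_some hn hM hv i hy x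
      unfold val2
      rw [hv1, hv2]

open Classical in
noncomputable def Pfun (M : MengerSg G n) (χ : G → G → Prop) (i0 : Fin n) (g : G) :
    NPlace (G × Option G) n :=
  fun vb => if ∀ i, (vb i).1 = (vb i0).1
    then (val2 M χ ((vb i0).1) g (fun i => (vb i).2)).map (fun v => ((vb i0).1, some v))
    else none

lemma Pfun_pos {M : MengerSg G n} {χ : G → G → Prop} {i0 : Fin n}
    {vb : Fin n → G × Option G} (h : ∀ i, (vb i).1 = (vb i0).1) (g : G) :
    Pfun M χ i0 g vb =
      (val2 M χ ((vb i0).1) g (fun i => (vb i).2)).map (fun v => ((vb i0).1, some v)) :=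
  if_pos h

lemma Pfun_neg {M : MengerSg G n} {χ : G → G → Prop} {i0 : Fin n}
    {vb : Fin n → G × Option G} (h : ¬ ∀ i, (vb i).1 = (vb i0).1) (g : G) :
    Pfun M χ i0 g vb = none := if_neg h

lemma Pfun_sup {M : MengerSg G n} {χ : G → G → Prop} (hn : 1 ≤ n)
    (hM : M.Representable) (htr : Transitive χ) (hv : M.VNegative χ)
    (i0 : Fin n) (x : G) (y : Fin n → G) :
    Pfun M χ i0 (M.sup x y) =
      superpose (Pfun M χ i0 x) (fun i => Pfun M χ i0 (y i)) := by
  funext vb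
  by_cases hf : ∀ i, (vb i).1 = (vb i0).1
  · rw [Pfun_pos hf, val2_sup hn hM htr hv]
    by_cases h : ∀ i, (val2 M χ ((vb i0).1) (y i) (fun j => (vb j).2)).isSome
    · rw [dif_pos h]
      have hPys : ∀ i, Pfun M χ i0 (y i) vb
          = some ((vb i0).1, some ((val2 M χ ((vb i0).1) (y i)
              (fun j => (vb j).2)).get (h i))) := by
        intro i
        rw [Pfun_pos hf]
        conv_lhs => rw [← Option.some_get (h i)]
        rfl
      have hPy : ∀ i, ((fun j => Pfun M χ i0 (y j)) i vb).isSome := by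
        intro i
        show (Pfun M χ i0 (y i) vb).isSome
        rw [hPys i]; rfl
      unfold superpose
      rw [dif_pos hPy]
      have hb : (fun i => ((fun j => Pfun M χ i0 (y j)) i vb).get (hPy i))
          = fun i => ((vb i0).1, some ((val2 M χ ((vb i0).1) (y i)
              (fun j => (vb j).2)).get (h i))) := by
        funext i
        apply Option.some_injective
        rw [Option.some_get]
        exact hPys i
      rw [hb]
      have hf' : ∀ i, ((fun j => ((vb i0).1, some ((val2 M χ ((vb i0).1) (y j)
              (fun k => (vb k).2)).get (h j)))) i).1
          = ((fun j => ((vb i0).1, some ((val2 M χ ((vb i0).1) (y j)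
              (fun k => (vb k).2)).get (h j)))) i0).1 := fun i => rfl
      rw [Pfun_pos hf']
    · rw [dif_neg h]
      push_neg at h
      obtain ⟨i₁, hi₁⟩ := h
      have hnone : Pfun M χ i0 (y i₁) vb = none := by
        rw [Pfun_pos hf, Option.not_isSome_iff_eq_none.mp hi₁]
        rfl
      unfold superpose
      rw [dif_neg]
      · simp
      · intro hall
        have h2 := hall i₁
        simp [hnone] at h2
  · rw [Pfun_neg hf]
    unfold superpose
    rw [dif_neg]
    intro hall
    have h2 := hall i0
    simp [Pfun_neg hf] at h2

lemma Pfun_op {M : MengerSg G n} {χ : G → G → Prop} (hn : 1 ≤ n)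
    (hM : M.Representable) (htr : Transitive χ) (hv : M.VNegative χ)
    (i0 : Fin n) (i : Fin n) (x y : G) :
    Pfun M χ i0 (M.op i x y) = opc i (Pfun M χ i0 x) (Pfun M χ i0 y) := by
  funext vb
  by_cases hf : ∀ j, (vb j).1 = (vb i0).1
  · rw [Pfun_pos hf, val2_op hn hM htr hv]
    cases h2 : val2 M χ ((vb i0).1) y (fun j => (vb j).2) with
    | none =>
        have hPy : Pfun M χ i0 y vb = none := by
          rw [Pfun_pos hf, h2]; rfl
        unfold opc
        rw [hPy]
        simp
    | some u =>
        have hPy : Pfun M χ i0 y vb = some ((vb i0).1, some u) := by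
          rw [Pfun_pos hf, h2]; rfl
        unfold opc
        rw [hPy, Option.bind_some, Option.bind_some]
        have hf' : ∀ j, (Function.update vb i ((vb i0).1, some u) j).1
            = (Function.update vb i ((vb i0).1, some u) i0).1 := by
          have hbase : (Function.update vb i ((vb i0).1, some u) i0).1 = (vb i0).1 := by
            by_cases hj : i0 = i
            · subst hj; rw [Function.update_self]
            · rw [Function.update_of_ne hj]
          intro j
          rw [hbase]
          by_cases hj : j = i
          · subst hj; rw [Function.update_self]
          · rw [Function.update_of_ne hj]; exact hf j
        rw [Pfun_pos hf']
        have hbase : (Function.update vb i ((vb i0).1, some u) i0).1 = (vb i0).1 := by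
          by_cases hj : i0 = i
          · subst hj; rw [Function.update_self]
          · rw [Function.update_of_ne hj]
        have hsnd : (fun j => (Function.update vb i ((vb i0).1, some u) j).2)
            = Function.update (fun j => (vb j).2) i (some u) := by
          funext j
          by_cases hj : j = i
          · subst hj; rw [Function.update_self, Function.update_self]
          · rw [Function.update_of_ne hj, Function.update_of_ne hj]
        rw [hsnd, hbase]
  · rw [Pfun_neg hf]
    unfold opc
    rw [Pfun_neg hf, Option.bind_none]

lemma Pfun_diag {M : MengerSg G n} {χ : G → G → Prop} (hn : 1 ≤ n)
    (i0 : Fin n) {g h : G} (hgh : χ g h) :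
    Pfun M χ i0 h (fun _ => (g, none)) = some (g, some h) := by
  have hf : ∀ i, ((fun _ : Fin n => ((g : G), (none : Option G))) i).1
      = ((fun _ : Fin n => ((g : G), (none : Option G))) i0).1 := fun _ => rfl
  rw [Pfun_pos hf]
  have hval : val M h (fun _ : Fin n => (none : Option G)) = some h :=
    val_allNone hn (fun _ => rfl) h
  have : val2 M χ g h (fun _ : Fin n => (none : Option G)) = some h :=
    val2_eq_some.mpr ⟨hval, hgh⟩
  rw [show (fun i : Fin n => ((fun _ : Fin n => ((g : G), (none : Option G))) i).2)
      = fun _ : Fin n => (none : Option G) from rfl, this]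
  rfl

lemma Pfun_dom_iff {M : MengerSg G n} {χ : G → G → Prop} (hn : 1 ≤ n)
    (hM : M.Representable) (hrefl : Reflexive χ) (htr : Transitive χ)
    (hl : M.LRegular χ) (i0 : Fin n) (g₁ g₂ : G) :
    pdom (Pfun M χ i0 g₁) ⊆ pdom (Pfun M χ i0 g₂) ↔ χ g₁ g₂ := by
  constructor
  · intro hsub
    have hmem : (fun _ : Fin n => ((g₁ : G), (none : Option G))) ∈ pdom (Pfun M χ i0 g₁) := by
      show (Pfun M χ i0 g₁ _).isSome
      rw [Pfun_diag hn i0 (hrefl g₁)]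
      rfl
    have := hsub hmem
    have h2 : (Pfun M χ i0 g₂ (fun _ => (g₁, none))).isSome := this
    rw [Pfun_pos (fun _ => rfl)] at h2
    rw [Option.isSome_map] at h2
    obtain ⟨v, hv1, hv2⟩ := val2_isSome.mp h2
    have : val M g₂ (fun i : Fin n => ((fun _ : Fin n => ((g₁ : G), (none : Option G))) i).2)
        = some g₂ := val_allNone hn (fun _ => rfl) g₂
    rw [this] at hv1
    injection hv1 with hv1
    subst hv1
    exact hv2
  · intro hχ vb hmem
    have h1 : (Pfun M χ i0 g₁ vb).isSome := hmem
    by_cases hf : ∀ i, (vb i).1 = (vb i0).1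
    · rw [Pfun_pos hf, Option.isSome_map] at h1
      obtain ⟨v₁, hv1, hav1⟩ := val2_isSome.mp h1
      have h2 : (val M g₂ (fun j => (vb j).2)).isSome :=
        val_dom hn hM (g := g₁) (by rw [hv1]; rfl) g₂
      obtain ⟨v₂, hv2⟩ := Option.isSome_iff_exists.mp h2
      have hχv : χ v₁ v₂ := val_mono hn hl hχ hv1 hv2
      show (Pfun M χ i0 g₂ vb).isSome
      rw [Pfun_pos hf, Option.isSome_map]
      exact val2_isSome.mpr ⟨v₂, hv2, htr hav1 hχv⟩
    · rw [Pfun_neg hf] at h1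
      exact absurd h1 (by simp)

lemma Pfun_inj {M : MengerSg G n} {χ : G → G → Prop} (hn : 1 ≤ n)
    (hrefl : Reflexive χ) (i0 : Fin n) :
    Function.Injective (Pfun M χ i0) := by
  intro g₁ g₂ hP
  have h1 := Pfun_diag (M := M) (χ := χ) hn i0 (hrefl g₁)
  rw [hP] at h1
  rw [Pfun_pos (fun _ => rfl)] at h1
  cases h2 : val2 M χ g₁ g₂ (fun i : Fin n =>
      ((fun _ : Fin n => ((g₁ : G), (none : Option G))) i).2) with
  | none => rw [h2] at h1; exact absurd h1 (by simp)
  | some u =>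
      rw [h2] at h1
      obtain ⟨hu, _⟩ := val2_eq_some.mp h2
      have : val M g₂ (fun i : Fin n =>
          ((fun _ : Fin n => ((g₁ : G), (none : Option G))) i).2) = some g₂ :=
        val_allNone hn (fun _ => rfl) g₂
      rw [this] at hu
      injection hu with hu
      subst hu
      simp only [Option.map_some] at h1
      injection h1 with h1
      injection h1 with _ h1
      injection h1 with h1
      exact h1.symm

lemma hardDir {G : Type u} {n : ℕ} (hn : 1 ≤ n)
    (M : MengerSg G n) (hM : M.Representable) (χ π : G → G → Prop)
    (h : QuasiOrder χ ∧ M.LRegular χ ∧ M.VNegative χ ∧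
      ∀ a b, π a b ↔ χ a b ∧ χ b a) :
    ∃ (A : Type u) (P : G → NPlace A n), M.IsRep P ∧ Function.Injective P ∧
      (∀ g₁ g₂, χ g₁ g₂ ↔ pdom (P g₁) ⊆ pdom (P g₂)) ∧
      (∀ g₁ g₂, π g₁ g₂ ↔ pdom (P g₁) = pdom (P g₂)) := by
  obtain ⟨⟨hrefl, htr⟩, hl, hv, hπ⟩ := h
  set i0 : Fin n := ⟨0, hn⟩
  refine ⟨G × Option G, Pfun M χ i0, ⟨?_, ?_⟩, Pfun_inj hn hrefl i0, ?_, ?_⟩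
  · intro x y; exact Pfun_sup hn hM htr hv i0 x y
  · intro i x y; exact Pfun_op hn hM htr hv i0 i x y
  · intro g₁ g₂
    exact (Pfun_dom_iff hn hM hrefl htr hl i0 g₁ g₂).symm
  · intro g₁ g₂
    rw [hπ, Set.Subset.antisymm_iff,
      ← Pfun_dom_iff hn hM hrefl htr hl i0 g₁ g₂,
      ← Pfun_dom_iff hn hM hrefl htr hl i0 g₂ g₁]

end Th4

open MengerSg

/-- Theorem 4: the pair (χ, π); projection representability, faithful projection
representability and the algebraic condition are all equivalent. -/
theorem theorem4 {G : Type u} {n : ℕ} (hn : 1 ≤ n)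
    (M : MengerSg G n) (hM : M.Representable) (χ π : G → G → Prop) :
    ((∃ (A : Type u) (P : G → NPlace A n), M.IsRep P ∧
        (∀ g₁ g₂, χ g₁ g₂ ↔ pdom (P g₁) ⊆ pdom (P g₂)) ∧
        (∀ g₁ g₂, π g₁ g₂ ↔ pdom (P g₁) = pdom (P g₂))) ↔
      (QuasiOrder χ ∧ M.LRegular χ ∧ M.VNegative χ ∧
        ∀ a b, π a b ↔ χ a b ∧ χ b a)) ∧
    ((∃ (A : Type u) (P : G → NPlace A n), M.IsRep P ∧ Function.Injective P ∧
        (∀ g₁ g₂, χ g₁ g₂ ↔ pdom (P g₁) ⊆ pdom (P g₂)) ∧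
        (∀ g₁ g₂, π g₁ g₂ ↔ pdom (P g₁) = pdom (P g₂))) ↔
      (QuasiOrder χ ∧ M.LRegular χ ∧ M.VNegative χ ∧
        ∀ a b, π a b ↔ χ a b ∧ χ b a)) := by
  constructor
  · constructor
    · rintro ⟨A, P, hrep, hχ, hπ⟩
      exact Th4.easyDir hn M χ π P hrep hχ hπ
    · intro h
      obtain ⟨A, P, h1, _, h3, h4⟩ := Th4.hardDir hn M hM χ π h
      exact ⟨A, P, h1, h3, h4⟩
  · constructor
    · rintro ⟨A, P, hrep, _, hχ, hπ⟩
      exact Th4.easyDir hn M χ π P hrep hχ hπ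
    · exact Th4.hardDir hn M hM χ π
end

section
/- Theorem 5: Let G be a representable Menger (2,n)-semigroup and χ a binary relation on G. The following are equivalent: (i) χ is projection representable for G; (ii) χ is faithfully projection representable for G; (iii) χ is an l-regular and v-negative quasi-order. -/
universe u

open MengerSg

namespace Thm5Aux

open MengerSg

variable {G : Type u} {n : ℕ}

/-! ### Generic facts about partial n-place functions -/

lemma mem_pdom {A : Type u} {f : NPlace A n} {a : Fin n → A} :
    a ∈ pdom f ↔ ∃ b, f a = some b := by
  simp [pdom, Option.isSome_iff_exists]

lemma mem_pdom_superpose {A : Type u} {f : NPlace A n} {g : Fin n → NPlace A n}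
    {a : Fin n → A} :
    a ∈ pdom (superpose f g) ↔
      ∃ h : ∀ i, (g i a).isSome, (fun i => (g i a).get (h i)) ∈ pdom f := by
  by_cases h : ∀ i, (g i a).isSome
  · simp [pdom, superpose, h]
  · simp [pdom, superpose, h]

lemma mem_pdom_opc {A : Type u} {i : Fin n} {f g : NPlace A n} {a : Fin n → A} :
    a ∈ pdom (opc i f g) ↔ ∃ b, g a = some b ∧ Function.update a i b ∈ pdom f := by
  simp only [pdom, opc, Set.mem_setOf_eq]
  cases hg : g a with
  | none => simp
  | some b => simp [hg]

lemma pdom_superpose_mono {A : Type u} {f₁ f₂ : NPlace A n} (g : Fin n → NPlace A n)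
    (h : pdom f₁ ⊆ pdom f₂) : pdom (superpose f₁ g) ⊆ pdom (superpose f₂ g) := by
  intro a ha
  rw [mem_pdom_superpose] at ha ⊢
  obtain ⟨hs, hf⟩ := ha
  exact ⟨hs, h hf⟩

lemma pdom_opc_mono {A : Type u} {i : Fin n} {f₁ f₂ : NPlace A n} (g : NPlace A n)
    (h : pdom f₁ ⊆ pdom f₂) : pdom (opc i f₁ g) ⊆ pdom (opc i f₂ g) := by
  intro a ha
  rw [mem_pdom_opc] at ha ⊢
  obtain ⟨b, hb, hf⟩ := ha
  exact ⟨b, hb, h hf⟩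

lemma pdom_opc_subset {A : Type u} {i : Fin n} {f g : NPlace A n} :
    pdom (opc i f g) ⊆ pdom g := by
  intro a ha
  rw [mem_pdom_opc] at ha
  obtain ⟨b, hb, -⟩ := ha
  rw [mem_pdom]
  exact ⟨b, hb⟩

/-! ### Basic facts about strings -/

lemma applyStr_nil (M : MengerSg G n) (x : G) : M.applyStr x [] = x := rfl

lemma applyStr_cons (M : MengerSg G n) (x : G) (p : Fin n × G) (L : List (Fin n × G)) :
    M.applyStr x (p :: L) = M.applyStr (M.op p.1 x p.2) L := rfl

lemma mu_cons (M : MengerSg G n) (i : Fin n) (p : Fin n × G) (L : List (Fin n × G)) :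
    M.mu i (p :: L) = if p.1 = i then some (M.applyStr p.2 L) else M.mu i L := rfl

lemma exists_mu_some (M : MengerSg G n) {L : List (Fin n × G)} (h : L ≠ []) :
    ∃ i v, M.mu i L = some v := by
  cases L with
  | nil => exact absurd rfl h
  | cons p rest => exact ⟨p.1, M.applyStr p.2 rest, by simp [mu_cons]⟩

lemma applyStr_sup (M : MengerSg G n)
    (h6 : ∀ (i : Fin n) (x : G) (y : Fin n → G) (z : G),
      M.op i (M.sup x y) z = M.sup x fun j => M.op i (y j) z) :
    ∀ (L : List (Fin n × G)) (x : G) (y : Fin n → G),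
      M.applyStr (M.sup x y) L = M.sup x fun j => M.applyStr (y j) L := by
  intro L
  induction L with
  | nil => intro x y; rfl
  | cons p rest ih =>
    intro x y
    rw [applyStr_cons, h6, ih]
    rfl

lemma applyStr_reg (M : MengerSg G n) {χ : G → G → Prop} (hreg : M.LRegular χ)
    {a b : G} (h : χ a b) (L : List (Fin n × G)) :
    χ (M.applyStr a L) (M.applyStr b L) := by
  induction L generalizing a b with
  | nil => exact h
  | cons p rest ih =>
    rw [applyStr_cons, applyStr_cons]
    exact ih ((hreg a b h).2 p.1 p.2)

/-! ### The easy direction: a representation yields the three conditions -/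

lemma rep_pdom_applyStr_mono {A : Type u} (M : MengerSg G n) {P : G → NPlace A n}
    (hrep : M.IsRep P) (L : List (Fin n × G)) :
    ∀ a b : G, pdom (P a) ⊆ pdom (P b) →
      pdom (P (M.applyStr a L)) ⊆ pdom (P (M.applyStr b L)) := by
  induction L with
  | nil => intro a b h; exact h
  | cons p rest ih =>
    intro a b h
    rw [applyStr_cons, applyStr_cons]
    apply ih
    rw [hrep.2, hrep.2]
    exact pdom_opc_mono _ h

lemma rep_pdom_mu {A : Type u} (M : MengerSg G n) {P : G → NPlace A n}
    (hrep : M.IsRep P) (L : List (Fin n × G)) :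
    ∀ (x : G) (j : Fin n) (m : G), M.mu j L = some m →
      pdom (P (M.applyStr x L)) ⊆ pdom (P m) := by
  induction L with
  | nil => intro x j m h; simp [MengerSg.mu] at h
  | cons p rest ih =>
    intro x j m h
    rw [mu_cons] at h
    rw [applyStr_cons]
    by_cases hpj : p.1 = j
    · rw [if_pos hpj] at h
      obtain rfl : M.applyStr p.2 rest = m := by injection h
      apply rep_pdom_applyStr_mono M hrep
      rw [hrep.2]
      exact pdom_opc_subset
    · rw [if_neg hpj] at h
      exact ih (M.op p.1 x p.2) j m h

lemma rep_to_conditions {A : Type u} (M : MengerSg G n) {P : G → NPlace A n}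
    (hrep : M.IsRep P) {χ : G → G → Prop}
    (hiff : ∀ g₁ g₂, χ g₁ g₂ ↔ pdom (P g₁) ⊆ pdom (P g₂)) :
    QuasiOrder χ ∧ M.LRegular χ ∧ M.VNegative χ := by
  refine ⟨⟨fun g => (hiff g g).mpr subset_rfl,
      fun a b c hab hbc => (hiff a c).mpr (((hiff a b).mp hab).trans ((hiff b c).mp hbc))⟩,
    ?_, ?_, ?_⟩
  · intro x y hxy
    refine ⟨fun z => ?_, fun i z => ?_⟩
    · rw [hiff, hrep.1, hrep.1]
      exact pdom_superpose_mono _ ((hiff x y).mp hxy)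
    · rw [hiff, hrep.2, hrep.2]
      exact pdom_opc_mono _ ((hiff x y).mp hxy)
  · intro x y i
    rw [hiff, hrep.1]
    intro a ha
    rw [mem_pdom_superpose] at ha
    obtain ⟨hs, -⟩ := ha
    simpa [pdom] using hs i
  · intro x L hL j m hm
    rw [hiff]
    exact rep_pdom_mu M hrep L x j m hm

/-! ### The construction of a faithful representation -/

/-- Valid profiles: empty, full, or realizable as the μ-profile of a string. -/
def VProf (M : MengerSg G n) (c : Fin n → Option G) : Prop :=
  (∀ i, (c i).isSome) ∨ (∃ L, L ≠ [] ∧ ∀ i, M.mu i L = c i) ∨ (∀ i, c i = none)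

open Classical in
/-- The value of `g` at a profile `c`. -/
noncomputable def wf (M : MengerSg G n) (g : G) (c : Fin n → Option G) : Option G :=
  if h : ∀ i, (c i).isSome then some (M.sup g fun i => (c i).get (h i))
  else if h2 : ∃ L, L ≠ [] ∧ ∀ i, M.mu i L = c i then some (M.applyStr g h2.choose)
  else if ∀ i, c i = none then some g else none

lemma wf_full (M : MengerSg G n) {c : Fin n → Option G} (h : ∀ i, (c i).isSome) (g : G) :
    wf M g c = some (M.sup g fun i => (c i).get (h i)) := dif_pos h

lemma not_valS_of_allnone (M : MengerSg G n) {c : Fin n → Option G}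
    (hc : ∀ i, c i = none) :
    ¬ ∃ L, L ≠ ([] : List (Fin n × G)) ∧ ∀ i, M.mu i L = c i := by
  rintro ⟨L, hL, hmu⟩
  obtain ⟨i, v, hv⟩ := exists_mu_some M hL
  rw [hmu i, hc i] at hv
  exact nomatch hv

lemma wf_allnone (M : MengerSg G n) (hn : 0 < n) {c : Fin n → Option G}
    (hc : ∀ i, c i = none) (g : G) : wf M g c = some g := by
  have h1 : ¬ ∀ i, (c i).isSome := by
    intro h; have := h ⟨0, hn⟩; rw [hc] at this; simp at this
  rw [wf, dif_neg h1, dif_neg (not_valS_of_allnone M hc), if_pos hc]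

lemma wf_str (M : MengerSg G n) (hM : M.Representable) {c : Fin n → Option G}
    {L : List (Fin n × G)} (hL : L ≠ []) (hmu : ∀ i, M.mu i L = c i) (g : G) :
    wf M g c = some (M.applyStr g L) := by
  by_cases h : ∀ i, (c i).isSome
  · rw [wf_full M h g]
    congr 1
    exact (hM.2.2.2 L hL _ (fun i => (hmu i).trans (Option.some_get (h i)).symm) g).symm
  · have h2 : ∃ L', L' ≠ ([] : List (Fin n × G)) ∧ ∀ i, M.mu i L' = c i := ⟨L, hL, hmu⟩
    rw [wf, dif_neg h, dif_pos h2]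
    congr 1
    exact hM.1 h2.choose L h2.choose_spec.1 hL
      (fun i => (h2.choose_spec.2 i).trans (hmu i).symm) g

lemma wf_none (M : MengerSg G n) {c : Fin n → Option G} (h : ¬ VProf M c) (g : G) :
    wf M g c = none := by
  rw [VProf, not_or, not_or] at h
  rw [wf, dif_neg h.1, dif_neg h.2.1, if_neg h.2.2]

lemma wf_some (M : MengerSg G n) (hM : M.Representable) (hn : 0 < n)
    {c : Fin n → Option G} (h : VProf M c) (g : G) : ∃ v, wf M g c = some v := by
  rcases h with h | ⟨L, hL, hmu⟩ | h
  · exact ⟨_, wf_full M h g⟩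
  · exact ⟨_, wf_str M hM hL hmu g⟩
  · exact ⟨_, wf_allnone M hn h g⟩

lemma VProf_of_wf (M : MengerSg G n) {c : Fin n → Option G} {g : G} {v : G}
    (h : wf M g c = some v) : VProf M c := by
  by_contra hV
  rw [wf_none M hV] at h
  exact nomatch h

/-- Key superposition law for `wf`. -/
lemma wf_sup (M : MengerSg G n) (hM : M.Representable) (hn : 0 < n)
    {c : Fin n → Option G} (x : G) (y vy : Fin n → G)
    (hvy : ∀ i, wf M (y i) c = some (vy i)) :
    wf M (M.sup x y) c = some (M.sup x vy) := by
  by_cases h1 : ∀ i, (c i).isSome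
  · have hv : ∀ i, vy i = M.sup (y i) fun j => (c j).get (h1 j) := fun i =>
      Option.some_injective _ ((hvy i).symm.trans (wf_full M h1 (y i)))
    rw [wf_full M h1, M.superassoc]
    exact congrArg (fun w => some (M.sup x w)) (funext fun j => (hv j).symm)
  · by_cases h2 : ∃ L, L ≠ ([] : List (Fin n × G)) ∧ ∀ i, M.mu i L = c i
    · obtain ⟨L, hL, hmu⟩ := h2
      have hv : ∀ i, vy i = M.applyStr (y i) L := fun i =>
        Option.some_injective _ ((hvy i).symm.trans (wf_str M hM hL hmu (y i)))
      rw [wf_str M hM hL hmu, applyStr_sup M hM.2.2.1]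
      exact congrArg (fun w => some (M.sup x w)) (funext fun j => (hv j).symm)
    · by_cases h3 : ∀ i, c i = none
      · have hv : ∀ i, vy i = y i := fun i =>
          Option.some_injective _ ((hvy i).symm.trans (wf_allnone M hn h3 (y i)))
        rw [wf_allnone M hn h3]
        exact congrArg (fun w => some (M.sup x w)) (funext fun j => (hv j).symm)
      · exfalso
        have hnV : ¬ VProf M c := by rintro (h | h | h) <;> [exact h1 h; exact h2 h; exact h3 h]
        have := (hvy ⟨0, hn⟩).symm.trans (wf_none M hnV (y ⟨0, hn⟩))
        exact nomatch this

/-- Key composition law for `wf`. -/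
lemma wf_op (M : MengerSg G n) (hM : M.Representable) (hn : 0 < n)
    {χ : G → G → Prop} (hneg : M.VNegative χ) {c : Fin n → Option G}
    (i : Fin n) (x y : G) {vy : G} (hvy : wf M y c = some vy) :
    ∃ v, wf M (M.op i x y) c = some v ∧
      wf M x (Function.update c i (some vy)) = some v ∧ χ v vy := by
  by_cases h1 : ∀ i, (c i).isSome
  · have hv : vy = M.sup y fun j => (c j).get (h1 j) :=
      Option.some_injective _ (hvy.symm.trans (wf_full M h1 y))
    have h1' : ∀ j, ((Function.update c i (some vy)) j).isSome := by
      intro j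
      rcases eq_or_ne j i with rfl | hj
      · simp
      · simp only [Function.update_of_ne hj]; exact h1 j
    refine ⟨M.sup x (Function.update (fun j => (c j).get (h1 j)) i vy), ?_, ?_, ?_⟩
    · rw [wf_full M h1, hM.2.1, hv]
    · rw [wf_full M h1']
      refine congrArg (fun w => some (M.sup x w)) (funext fun j => ?_)
      rcases eq_or_ne j i with rfl | hj
      · simp
      · simp [Function.update_of_ne hj]
    · have := hneg.1 x (Function.update (fun j => (c j).get (h1 j)) i vy) i
      rwa [Function.update_self] at this
  · by_cases h2 : ∃ L, L ≠ ([] : List (Fin n × G)) ∧ ∀ i, M.mu i L = c i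
    · obtain ⟨L, hL, hmu⟩ := h2
      have hv : vy = M.applyStr y L :=
        Option.some_injective _ (hvy.symm.trans (wf_str M hM hL hmu y))
      have hmu' : ∀ j, M.mu j ((i, y) :: L) = Function.update c i (some vy) j := by
        intro j
        rw [mu_cons]
        rcases eq_or_ne j i with rfl | hj
        · rw [if_pos rfl, Function.update_self, hv]
        · rw [if_neg (by simpa using hj.symm), Function.update_of_ne hj, hmu j]
      refine ⟨M.applyStr x ((i, y) :: L), ?_, ?_, ?_⟩
      · rw [wf_str M hM hL hmu, applyStr_cons]
      · exact wf_str M hM (List.cons_ne_nil _ _) hmu' x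
      · have := hneg.2 x ((i, y) :: L) (List.cons_ne_nil _ _) i vy
          (by rw [mu_cons, if_pos rfl, hv])
        exact this
    · by_cases h3 : ∀ j, c j = none
      · have hv : vy = y :=
          Option.some_injective _ (hvy.symm.trans (wf_allnone M hn h3 y))
        have hmu' : ∀ j, M.mu j [(i, y)] = Function.update c i (some vy) j := by
          intro j
          rw [mu_cons]
          rcases eq_or_ne j i with rfl | hj
          · rw [if_pos rfl, Function.update_self, hv]; rfl
          · rw [if_neg (by simpa using hj.symm), Function.update_of_ne hj, h3 j]; rfl
        refine ⟨M.applyStr x [(i, y)], ?_, ?_, ?_⟩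
        · rw [wf_allnone M hn h3]; rfl
        · exact wf_str M hM (List.cons_ne_nil _ _) hmu' x
        · have := hneg.2 x [(i, y)] (List.cons_ne_nil _ _) i vy
            (by rw [mu_cons, if_pos rfl, hv]; rfl)
          exact this
      · exfalso
        have hnV : ¬ VProf M c := by rintro (h | h | h) <;> [exact h1 h; exact h2 h; exact h3 h]
        rw [wf_none M hnV] at hvy
        exact nomatch hvy

/-- `wf` is monotone along an l-regular relation. -/
lemma wf_reg (M : MengerSg G n) (hn : 0 < n) {χ : G → G → Prop}
    (hreg : M.LRegular χ) {c : Fin n → Option G} {g₁ g₂ v₁ v₂ : G} (h : χ g₁ g₂)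
    (h₁ : wf M g₁ c = some v₁) (h₂ : wf M g₂ c = some v₂) : χ v₁ v₂ := by
  by_cases hf : ∀ i, (c i).isSome
  · rw [wf_full M hf] at h₁ h₂
    obtain rfl := Option.some_injective _ h₁.symm
    obtain rfl := Option.some_injective _ h₂.symm
    exact (hreg _ _ h).1 _
  · by_cases h2 : ∃ L, L ≠ ([] : List (Fin n × G)) ∧ ∀ i, M.mu i L = c i
    · rw [wf, dif_neg hf, dif_pos h2] at h₁ h₂
      obtain rfl := Option.some_injective _ h₁.symm
      obtain rfl := Option.some_injective _ h₂.symm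
      exact applyStr_reg M hreg h _
    · by_cases h3 : ∀ i, c i = none
      · rw [wf_allnone M hn h3] at h₁ h₂
        obtain rfl := Option.some_injective _ h₁.symm
        obtain rfl := Option.some_injective _ h₂.symm
        exact h
      · exfalso
        have hnV : ¬ VProf M c := by rintro (h | h | h) <;> [exact hf h; exact h2 h; exact h3 h]
        rw [wf_none M hnV] at h₁
        exact nomatch h₁

open Classical in
/-- The representation. -/
noncomputable def Pmap (M : MengerSg G n) (χ : G → G → Prop) (hn : 0 < n) (g : G) :
    NPlace (G × Option G) n := fun a =>
  (wf M g fun i => (a i).2).bind fun v =>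
    if (∀ i, (a i).1 = (a ⟨0, hn⟩).1) ∧ χ (a ⟨0, hn⟩).1 v then
      some ((a ⟨0, hn⟩).1, some v)
    else none

lemma Pmap_eq_some_iff {M : MengerSg G n} {χ : G → G → Prop} {hn : 0 < n}
    {g : G} {a : Fin n → G × Option G} {p : G × Option G} :
    Pmap M χ hn g a = some p ↔
      ∃ v, wf M g (fun i => (a i).2) = some v ∧ (∀ i, (a i).1 = (a ⟨0, hn⟩).1) ∧
        χ (a ⟨0, hn⟩).1 v ∧ p = ((a ⟨0, hn⟩).1, some v) := by
  rw [Pmap]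
  cases hw : wf M g fun i => (a i).2 with
  | none => simp
  | some v =>
    by_cases h : (∀ i, (a i).1 = (a ⟨0, hn⟩).1) ∧ χ (a ⟨0, hn⟩).1 v
    · simp only [Option.bind_some, if_pos h]
      constructor
      · rintro h'
        exact ⟨v, rfl, h.1, h.2, (Option.some_injective _ h').symm⟩
      · rintro ⟨v', hv', -, -, rfl⟩
        obtain rfl := Option.some_injective _ hv'
        rfl
    · simp only [Option.bind_some, if_neg h]
      constructor
      · rintro h'; exact nomatch h'
      · rintro ⟨v', hv', h1, h2, rfl⟩
        obtain rfl := Option.some_injective _ hv'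
        exact absurd ⟨h1, h2⟩ h

open Classical in
lemma Pmap_at_full (M : MengerSg G n) (χ : G → G → Prop) (hn : 0 < n) (g u : G)
    (w : Fin n → G) :
    Pmap M χ hn g (fun i => (u, some (w i))) =
      if χ u (M.sup g w) then some (u, some (M.sup g w)) else none := by
  have h1 : ∀ i, ((some (w i) : Option G)).isSome := fun i => rfl
  simp only [Pmap]
  rw [show (fun i => ((fun i => ((u, some (w i)) : G × Option G)) i).2) =
      (fun i => (some (w i) : Option G)) from rfl,
    wf_full M (c := fun i => some (w i)) h1]
  simp only [Option.bind_some, Option.get_some]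
  by_cases hχ : χ u (M.sup g w)
  · rw [if_pos ⟨fun _ => trivial, hχ⟩, if_pos hχ]
  · rw [if_neg, if_neg hχ]
    rintro ⟨-, hc⟩
    exact hχ hc

lemma Pmap_none_of_not_src (M : MengerSg G n) (χ : G → G → Prop) (hn : 0 < n)
    {a : Fin n → G × Option G} (h : ¬ ∀ i, (a i).1 = (a ⟨0, hn⟩).1) (g : G) :
    Pmap M χ hn g a = none := by
  rw [Pmap]
  cases hw : wf M g fun i => (a i).2 with
  | none => rfl
  | some v =>
    simp only [Option.bind_some]
    rw [if_neg (fun hc => h hc.1)]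

lemma Pmap_none_of_not_VProf (M : MengerSg G n) (χ : G → G → Prop) (hn : 0 < n)
    {a : Fin n → G × Option G} (h : ¬ VProf M (fun i => (a i).2)) (g : G) :
    Pmap M χ hn g a = none := by
  rw [Pmap, wf_none M h]
  rfl

lemma Pmap_rep_sup (M : MengerSg G n) (hM : M.Representable) (hn : 0 < n)
    {χ : G → G → Prop} (hq : QuasiOrder χ) (hneg : M.VNegative χ)
    (x : G) (y : Fin n → G) :
    Pmap M χ hn (M.sup x y) = superpose (Pmap M χ hn x) fun i => Pmap M χ hn (y i) := by
  funext a
  by_cases hV : VProf M (fun i => (a i).2)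
  · by_cases hsrc : ∀ i, (a i).1 = (a ⟨0, hn⟩).1
    · choose vy hvy using fun i => wf_some M hM hn hV (y i)
      have hws := wf_sup M hM hn x y vy hvy
      by_cases hχ : χ (a ⟨0, hn⟩).1 (M.sup x vy)
      · have hχy : ∀ i, χ (a ⟨0, hn⟩).1 (vy i) := fun i => hq.2 hχ (hneg.1 x vy i)
        have hPy : ∀ i, Pmap M χ hn (y i) a = some ((a ⟨0, hn⟩).1, some (vy i)) := fun i => by
          rw [Pmap, hvy i]
          simp only [Option.bind_some]
          rw [if_pos ⟨hsrc, hχy i⟩]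
        have hL : Pmap M χ hn (M.sup x y) a = some ((a ⟨0, hn⟩).1, some (M.sup x vy)) := by
          rw [Pmap, hws]
          simp only [Option.bind_some]
          rw [if_pos ⟨hsrc, hχ⟩]
        have hall : ∀ i, ((Pmap M χ hn (y i)) a).isSome := fun i => by rw [hPy i]; rfl
        rw [hL]
        simp only [superpose]
        rw [dif_pos hall]
        have hb : (fun i => ((Pmap M χ hn (y i)) a).get (hall i)) =
            fun i => ((a ⟨0, hn⟩).1, some (vy i)) := by
          funext i
          simp [hPy i]
        rw [hb, Pmap_at_full M χ hn x (a ⟨0, hn⟩).1 vy, if_pos hχ]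
      · have hL : Pmap M χ hn (M.sup x y) a = none := by
          rw [Pmap, hws]
          simp only [Option.bind_some]
          rw [if_neg (fun hc => hχ hc.2)]
        rw [hL]
        simp only [superpose]
        by_cases hall : ∀ i, ((Pmap M χ hn (y i)) a).isSome
        · rw [dif_pos hall]
          have hPy : ∀ i, Pmap M χ hn (y i) a = some ((a ⟨0, hn⟩).1, some (vy i)) := by
            intro i
            have h := hall i
            rw [Option.isSome_iff_exists] at h
            obtain ⟨p, hp⟩ := h
            obtain ⟨v, hv, -, -, rfl⟩ := Pmap_eq_some_iff.mp hp
            obtain rfl := Option.some_injective _ ((hvy i).symm.trans hv)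
            exact hp
          have hb : (fun i => ((Pmap M χ hn (y i)) a).get (hall i)) =
              fun i => ((a ⟨0, hn⟩).1, some (vy i)) := by
            funext i
            simp [hPy i]
          rw [hb, Pmap_at_full M χ hn x (a ⟨0, hn⟩).1 vy, if_neg hχ]
        · rw [dif_neg hall]
    · have hP : ∀ g, Pmap M χ hn g a = none := Pmap_none_of_not_src M χ hn hsrc
      rw [hP]
      simp only [superpose]
      rw [dif_neg]
      intro hall
      have := hall ⟨0, hn⟩
      rw [hP (y ⟨0, hn⟩)] at this
      simp at this
  · have hP : ∀ g, Pmap M χ hn g a = none := Pmap_none_of_not_VProf M χ hn hV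
    rw [hP]
    simp only [superpose]
    rw [dif_neg]
    intro hall
    have := hall ⟨0, hn⟩
    rw [hP (y ⟨0, hn⟩)] at this
    simp at this

lemma Pmap_rep_op (M : MengerSg G n) (hM : M.Representable) (hn : 0 < n)
    {χ : G → G → Prop} (hq : QuasiOrder χ) (hneg : M.VNegative χ)
    (i : Fin n) (x y : G) :
    Pmap M χ hn (M.op i x y) = opc i (Pmap M χ hn x) (Pmap M χ hn y) := by
  funext a
  simp only [opc]
  cases hPy : Pmap M χ hn y a with
  | none =>
    simp only [Option.bind_none]
    by_cases hV : VProf M (fun i => (a i).2)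
    · obtain ⟨vy, hvy⟩ := wf_some M hM hn hV y
      obtain ⟨v, hv1, hv2, hv3⟩ := wf_op M hM hn hneg i x y hvy
      rw [Pmap, hv1]
      simp only [Option.bind_some]
      rw [if_neg]
      rintro ⟨hsrc, hχ⟩
      have : Pmap M χ hn y a = some ((a ⟨0, hn⟩).1, some vy) := by
        rw [Pmap, hvy]
        simp only [Option.bind_some]
        rw [if_pos ⟨hsrc, hq.2 hχ hv3⟩]
      rw [hPy] at this
      exact nomatch this
    · exact Pmap_none_of_not_VProf M χ hn hV _
  | some b =>
    obtain ⟨vy, hvy, hsrc, hχy, rfl⟩ := Pmap_eq_some_iff.mp hPy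
    obtain ⟨v, hv1, hv2, hv3⟩ := wf_op M hM hn hneg i x y hvy
    simp only [Option.bind_some]
    have hprof : (fun j => ((Function.update a i ((a ⟨0, hn⟩).1, some vy)) j).2) =
        Function.update (fun j => (a j).2) i (some vy) := by
      funext j
      rcases eq_or_ne j i with rfl | hj
      · simp
      · simp [Function.update_of_ne hj]
    have hsrcu : (Function.update a i ((a ⟨0, hn⟩).1, some vy) ⟨0, hn⟩).1 = (a ⟨0, hn⟩).1 := by
      rcases eq_or_ne (⟨0, hn⟩ : Fin n) i with rfl | hne
      · simp
      · simp [Function.update_of_ne hne]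
    have hsrc' : ∀ j, (Function.update a i ((a ⟨0, hn⟩).1, some vy) j).1 =
        (Function.update a i ((a ⟨0, hn⟩).1, some vy) ⟨0, hn⟩).1 := by
      intro j
      rw [hsrcu]
      rcases eq_or_ne j i with rfl | hj
      · simp
      · rw [Function.update_of_ne hj]
        exact hsrc j
    simp only [Pmap]
    rw [hv1, hprof, hv2]
    simp only [Option.bind_some]
    by_cases hχv : χ (a ⟨0, hn⟩).1 v
    · rw [if_pos ⟨hsrc, hχv⟩, if_pos ⟨hsrc', by rw [hsrcu]; exact hχv⟩, hsrcu]
    · rw [if_neg (fun hc => hχv hc.2), if_neg]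
      rintro ⟨-, hc⟩
      rw [hsrcu] at hc
      exact hχv hc

open Classical in
lemma Pmap_const (M : MengerSg G n) (χ : G → G → Prop) (hn : 0 < n) (g h : G) :
    Pmap M χ hn h (fun _ => (g, none)) = if χ g h then some (g, some h) else none := by
  simp only [Pmap]
  rw [show (fun i => ((fun _ => ((g, none) : G × Option G)) i).2) =
      (fun _ => (none : Option G)) from rfl,
    wf_allnone M hn (c := fun _ => (none : Option G)) (fun _ => rfl) h]
  simp only [Option.bind_some]
  by_cases hχ : χ g h
  · rw [if_pos ⟨fun _ => trivial, hχ⟩, if_pos hχ]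
  · rw [if_neg, if_neg hχ]
    rintro ⟨-, hc⟩
    exact hχ hc

lemma conditions_to_rep (M : MengerSg G n) (hM : M.Representable) (hn : 0 < n)
    {χ : G → G → Prop} (hq : QuasiOrder χ) (hreg : M.LRegular χ) (hneg : M.VNegative χ) :
    ∃ (A : Type u) (P : G → NPlace A n), M.IsRep P ∧ Function.Injective P ∧
      ∀ g₁ g₂, χ g₁ g₂ ↔ pdom (P g₁) ⊆ pdom (P g₂) := by
  refine ⟨G × Option G, Pmap M χ hn,
    ⟨Pmap_rep_sup M hM hn hq hneg, Pmap_rep_op M hM hn hq hneg⟩, ?_, ?_⟩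
  · intro g₁ g₂ h
    have h1 := congrFun h (fun _ => (g₁, none))
    rw [Pmap_const, Pmap_const, if_pos (hq.1 g₁)] at h1
    by_cases hχ : χ g₁ g₂
    · rw [if_pos hχ] at h1
      have := (Prod.ext_iff.mp (Option.some_injective _ h1)).2
      exact Option.some_injective _ this
    · rw [if_neg hχ] at h1
      exact nomatch h1
  · intro g₁ g₂
    constructor
    · intro h a ha
      rw [mem_pdom] at ha ⊢
      obtain ⟨p, hp⟩ := ha
      obtain ⟨v₁, hv₁, hsrc, hχ, rfl⟩ := Pmap_eq_some_iff.mp hp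
      obtain ⟨v₂, hv₂⟩ := wf_some M hM hn (VProf_of_wf M hv₁) g₂
      refine ⟨((a ⟨0, hn⟩).1, some v₂), Pmap_eq_some_iff.mpr ⟨v₂, hv₂, hsrc, ?_, rfl⟩⟩
      exact hq.2 hχ (wf_reg M hn hreg h hv₁ hv₂)
    · intro h
      have h1 : (fun _ => (g₁, none) : Fin n → G × Option G) ∈ pdom (Pmap M χ hn g₁) := by
        rw [mem_pdom]
        exact ⟨_, by rw [Pmap_const, if_pos (hq.1 g₁)]⟩
      have h2 := h h1
      rw [mem_pdom] at h2
      obtain ⟨p, hp⟩ := h2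
      rw [Pmap_const] at hp
      by_cases hχ : χ g₁ g₂
      · exact hχ
      · rw [if_neg hχ] at hp
        exact nomatch hp

end Thm5Aux

/-- Theorem 5: a single relation χ. -/
theorem theorem5 {G : Type u} {n : ℕ} (hn : 1 ≤ n)
    (M : MengerSg G n) (hM : M.Representable) (χ : G → G → Prop) :
    ((∃ (A : Type u) (P : G → NPlace A n), M.IsRep P ∧
        ∀ g₁ g₂, χ g₁ g₂ ↔ pdom (P g₁) ⊆ pdom (P g₂)) ↔
      (QuasiOrder χ ∧ M.LRegular χ ∧ M.VNegative χ)) ∧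
    ((∃ (A : Type u) (P : G → NPlace A n), M.IsRep P ∧ Function.Injective P ∧
        ∀ g₁ g₂, χ g₁ g₂ ↔ pdom (P g₁) ⊆ pdom (P g₂)) ↔
      (QuasiOrder χ ∧ M.LRegular χ ∧ M.VNegative χ)) := by
  constructor
  · constructor
    · rintro ⟨A, P, hrep, hiff⟩
      exact Thm5Aux.rep_to_conditions M hrep hiff
    · rintro ⟨hq, hreg, hneg⟩
      obtain ⟨A, P, hrep, -, hiff⟩ := Thm5Aux.conditions_to_rep M hM hn hq hreg hneg
      exact ⟨A, P, hrep, hiff⟩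
  · constructor
    · rintro ⟨A, P, hrep, -, hiff⟩
      exact Thm5Aux.rep_to_conditions M hrep hiff
    · rintro ⟨hq, hreg, hneg⟩
      exact Thm5Aux.conditions_to_rep M hM hn hq hreg hneg
end

section
/- Theorem 6: Let G be a representable Menger (2,n)-semigroup and π a binary relation on G. The following are equivalent: (i) π is projection representable for G; (ii) π is faithfully projection representable for G; (iii) π is an l-regular equivalence relation with χ(π) ∩ χ(π)⁻¹ ⊆ π. -/
universe u

open MengerSg


namespace MengerSg

variable {G : Type u} {n : ℕ}

/-! ### Basic lemmas on strings -/

theorem applyStr_nil (M : MengerSg G n) (x : G) : M.applyStr x [] = x := rfl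

theorem applyStr_cons (M : MengerSg G n) (x : G) (p : Fin n × G) (L : List (Fin n × G)) :
    M.applyStr x (p :: L) = M.applyStr (M.op p.1 x p.2) L := rfl

theorem mu_cons (M : MengerSg G n) (i : Fin n) (p : Fin n × G) (L : List (Fin n × G)) :
    M.mu i (p :: L) = if p.1 = i then some (M.applyStr p.2 L) else M.mu i L := rfl

theorem exists_mu_some (M : MengerSg G n) {L : List (Fin n × G)} (hL : L ≠ []) :
    ∃ j m, M.mu j L = some m := by
  match L, hL with
  | p :: rest, _ => exact ⟨p.1, M.applyStr p.2 rest, by simp [mu_cons]⟩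

/-! ### χ lemmas -/

theorem delta1_id (M : MengerSg G n) (a : G) : delta1 M a a := ⟨id, IsTransl.id, rfl⟩

theorem chi_step {M : MengerSg G n} {π : G → G → Prop} (hrefl : ∀ a, π a a) {a b c : G}
    (h1 : delta1 M a b) (h2 : delta2 M b c ∨ b = c) : chiRel M π a c :=
  Relation.TransGen.single ⟨b, ⟨a, hrefl a, h1⟩, h2⟩

theorem chi_of_pi {M : MengerSg G n} {π : G → G → Prop} {a c : G} (h : π a c) :
    chiRel M π a c :=
  Relation.TransGen.single ⟨c, ⟨c, h, delta1_id M c⟩, Or.inr rfl⟩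

theorem chi_sup {M : MengerSg G n} {π : G → G → Prop} (hrefl : ∀ a, π a a)
    (x : G) (v : Fin n → G) (i : Fin n) : chiRel M π (M.sup x v) (v i) := by
  refine chi_step hrefl ⟨fun w => M.sup x (Function.update v i w), ?_, ?_⟩ (Or.inr rfl)
  · exact IsTransl.step id IsTransl.id i x v
  · simp [Function.update_eq_self]

theorem chi_delta2 {M : MengerSg G n} {π : G → G → Prop} (hrefl : ∀ a, π a a) {b c : G}
    (h : delta2 M b c) : chiRel M π b c :=
  chi_step hrefl (delta1_id M b) (Or.inl h)

theorem chi_applyStr {M : MengerSg G n} {π : G → G → Prop} (hrefl : ∀ a, π a a)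
    {L : List (Fin n × G)} (hL : L ≠ []) {i : Fin n} {m : G}
    (hmu : M.mu i L = some m) (x : G) : chiRel M π (M.applyStr x L) m :=
  chi_delta2 hrefl ⟨x, L, i, m, hL, hmu, Or.inl ⟨rfl, rfl⟩⟩

theorem chi_applyStr_sup {M : MengerSg G n} {π : G → G → Prop} (hrefl : ∀ a, π a a)
    {L : List (Fin n × G)} (hL : L ≠ []) {i : Fin n} {m : G}
    (hmu : M.mu i L = some m) (x : G) (z : Fin n → G) :
    chiRel M π (M.sup (M.applyStr x L) z) (M.sup m z) :=
  chi_delta2 hrefl ⟨x, L, i, m, hL, hmu, Or.inr ⟨z, rfl, rfl⟩⟩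

/-! ### The reflexive closure of χ -/

def Rho (M : MengerSg G n) (π : G → G → Prop) : G → G → Prop :=
  fun a c => chiRel M π a c ∨ a = c

theorem rho_refl (M : MengerSg G n) (π : G → G → Prop) (a : G) : Rho M π a a := Or.inr rfl

theorem rho_chi {M : MengerSg G n} {π : G → G → Prop} {b u v : G}
    (h : Rho M π b u) (h' : chiRel M π u v) : Rho M π b v := by
  rcases h with h | rfl
  · exact Or.inl (h.trans h')
  · exact Or.inl h'

theorem rho_pi {M : MengerSg G n} {π : G → G → Prop} {b u v : G}
    (h : Rho M π b u) (h' : π u v) : Rho M π b v := rho_chi h (chi_of_pi h')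

/-! ### The evaluation `V` of an element against a partial μ-vector -/

open Classical in
/-- Evaluation of `g` against a partial μ-vector `s`. -/
noncomputable def V (M : MengerSg G n) (g : G) (s : Fin n → Option G) : G :=
  if h : ∀ i, (s i).isSome then M.sup g (fun i => (s i).get (h i))
  else if h2 : ∃ L, L ≠ ([] : List (Fin n × G)) ∧ ∀ j, M.mu j L = s j then
    M.applyStr g h2.choose
  else g

/-- A partial μ-vector is realizable. -/
def Realizable (M : MengerSg G n) (s : Fin n → Option G) : Prop :=
  (∀ i, s i = none) ∨ (∀ i, (s i).isSome) ∨
    ∃ L, L ≠ ([] : List (Fin n × G)) ∧ ∀ j, M.mu j L = s j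

theorem V_full {M : MengerSg G n} {s : Fin n → Option G} (h : ∀ i, (s i).isSome) (g : G) :
    V M g s = M.sup g (fun i => (s i).get (h i)) := by
  unfold V
  rw [dif_pos h]

theorem V_eq_applyStr {M : MengerSg G n}
    (h4 : ∀ L₁ L₂ : List (Fin n × G), L₁ ≠ [] → L₂ ≠ [] →
      (∀ i, mu M i L₁ = mu M i L₂) → ∀ g, applyStr M g L₁ = applyStr M g L₂)
    (h7 : ∀ L : List (Fin n × G), L ≠ [] → ∀ m : Fin n → G,
      (∀ i, mu M i L = some (m i)) → ∀ x, applyStr M x L = M.sup x m)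
    {s : Fin n → Option G} {L : List (Fin n × G)} (hL : L ≠ [])
    (hmu : ∀ j, M.mu j L = s j) (g : G) : V M g s = M.applyStr g L := by
  unfold V
  split
  · next h =>
    exact (h7 L hL (fun i => (s i).get (h i))
      (fun i => by rw [hmu i]; exact (Option.some_get (h i)).symm) g).symm
  · next h =>
    split
    · next h2 =>
      exact h4 _ L h2.choose_spec.1 hL
        (fun i => (h2.choose_spec.2 i).trans (hmu i).symm) g
    · next h2 => exact absurd ⟨L, hL, hmu⟩ h2

theorem V_none (hn : 1 ≤ n) (M : MengerSg G n) (g : G) :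
    V M g (fun _ => (none : Option G)) = g := by
  unfold V
  rw [dif_neg, dif_neg]
  · rintro ⟨L, hL, hmu⟩
    obtain ⟨j, m, hjm⟩ := exists_mu_some M hL
    rw [hmu j] at hjm
    simp at hjm
  · intro h
    simpa using h ⟨0, hn⟩

theorem applyStr_sup {M : MengerSg G n}
    (h6 : ∀ (i : Fin n) (x : G) (y : Fin n → G) (z : G),
      M.op i (M.sup x y) z = M.sup x fun j => M.op i (y j) z)
    (L : List (Fin n × G)) : ∀ (x : G) (y : Fin n → G),
    M.applyStr (M.sup x y) L = M.sup x (fun i => M.applyStr (y i) L) := by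
  induction L with
  | nil => intro x y; rfl
  | cons p rest ih =>
    intro x y
    rw [applyStr_cons, h6, ih]
    rfl

theorem V_sup {M : MengerSg G n} (hn : 1 ≤ n)
    (h4 : ∀ L₁ L₂ : List (Fin n × G), L₁ ≠ [] → L₂ ≠ [] →
      (∀ i, mu M i L₁ = mu M i L₂) → ∀ g, applyStr M g L₁ = applyStr M g L₂)
    (h6 : ∀ (i : Fin n) (x : G) (y : Fin n → G) (z : G),
      M.op i (M.sup x y) z = M.sup x fun j => M.op i (y j) z)
    (h7 : ∀ L : List (Fin n × G), L ≠ [] → ∀ m : Fin n → G,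
      (∀ i, mu M i L = some (m i)) → ∀ x, applyStr M x L = M.sup x m)
    {s : Fin n → Option G} (hs : Realizable M s) (x : G) (y : Fin n → G) :
    V M (M.sup x y) s = M.sup x (fun i => V M (y i) s) := by
  rcases hs with hs | hs | ⟨L, hL, hmu⟩
  · have hsE : s = fun _ => none := funext hs
    subst hsE
    rw [V_none hn]
    congr 1
    funext i
    rw [V_none hn]
  · rw [V_full hs (M.sup x y), M.superassoc]
    congr 1
    funext i
    rw [V_full hs]
  · rw [V_eq_applyStr h4 h7 hL hmu, applyStr_sup h6]
    congr 1
    funext i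
    rw [V_eq_applyStr h4 h7 hL hmu]

theorem realiz_update_of_realiz {M : MengerSg G n}
    (h4 : ∀ L₁ L₂ : List (Fin n × G), L₁ ≠ [] → L₂ ≠ [] →
      (∀ i, mu M i L₁ = mu M i L₂) → ∀ g, applyStr M g L₁ = applyStr M g L₂)
    (h7 : ∀ L : List (Fin n × G), L ≠ [] → ∀ m : Fin n → G,
      (∀ i, mu M i L = some (m i)) → ∀ x, applyStr M x L = M.sup x m)
    {s : Fin n → Option G} {L : List (Fin n × G)} (hL : L ≠ [])
    (hmu : ∀ j, M.mu j L = s j) (i : Fin n) (y : G) :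
    ∀ j, M.mu j (((i, y) : Fin n × G) :: L) =
      Function.update s i (some (V M y s)) j := by
  intro j
  rw [mu_cons]
  by_cases h : j = i
  · subst h
    rw [if_pos rfl, Function.update_self, V_eq_applyStr h4 h7 hL hmu]
  · rw [if_neg (Ne.symm h), Function.update_of_ne h, hmu j]

theorem realiz_single {M : MengerSg G n} (hn : 1 ≤ n) (i : Fin n) (y : G) :
    ∀ j, M.mu j [((i, y) : Fin n × G)] =
      Function.update (fun _ => (none : Option G)) i (some (V M y (fun _ => none))) j := by
  intro j
  rw [mu_cons]
  by_cases h : j = i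
  · subst h
    rw [if_pos rfl, Function.update_self, V_none hn, applyStr_nil]
  · rw [if_neg (Ne.symm h), Function.update_of_ne h]
    rfl

theorem realizable_update {M : MengerSg G n} (hn : 1 ≤ n)
    (h4 : ∀ L₁ L₂ : List (Fin n × G), L₁ ≠ [] → L₂ ≠ [] →
      (∀ i, mu M i L₁ = mu M i L₂) → ∀ g, applyStr M g L₁ = applyStr M g L₂)
    (h7 : ∀ L : List (Fin n × G), L ≠ [] → ∀ m : Fin n → G,
      (∀ i, mu M i L = some (m i)) → ∀ x, applyStr M x L = M.sup x m)
    {s : Fin n → Option G} (hs : Realizable M s) (i : Fin n) (y : G) :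
    Realizable M (Function.update s i (some (V M y s))) := by
  rcases hs with hs | hs | ⟨L, hL, hmu⟩
  · have hsE : s = fun _ => none := funext hs
    subst hsE
    exact Or.inr (Or.inr ⟨[(i, y)], by simp, realiz_single hn i y⟩)
  · refine Or.inr (Or.inl fun j => ?_)
    by_cases h : j = i
    · subst h; rw [Function.update_self]; rfl
    · rw [Function.update_of_ne h]; exact hs j
  · exact Or.inr (Or.inr ⟨(i, y) :: L, by simp, realiz_update_of_realiz h4 h7 hL hmu i y⟩)

theorem V_update {M : MengerSg G n} (hn : 1 ≤ n)
    (h4 : ∀ L₁ L₂ : List (Fin n × G), L₁ ≠ [] → L₂ ≠ [] →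
      (∀ i, mu M i L₁ = mu M i L₂) → ∀ g, applyStr M g L₁ = applyStr M g L₂)
    (h5 : ∀ (i : Fin n) (x y : G) (z : Fin n → G),
      M.sup (M.op i x y) z = M.sup x (Function.update z i (M.sup y z)))
    (h7 : ∀ L : List (Fin n × G), L ≠ [] → ∀ m : Fin n → G,
      (∀ i, mu M i L = some (m i)) → ∀ x, applyStr M x L = M.sup x m)
    {s : Fin n → Option G} (hs : Realizable M s) (i : Fin n) (x y : G) :
    V M x (Function.update s i (some (V M y s))) = V M (M.op i x y) s := by
  rcases hs with hs | hs | ⟨L, hL, hmu⟩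
  · have hsE : s = fun _ => none := funext hs
    subst hsE
    rw [V_eq_applyStr h4 h7 (L := [(i, y)]) (by simp) (realiz_single hn i y),
      V_none hn]
    rfl
  · have hs' : ∀ j, ((Function.update s i (some (V M y s))) j).isSome := by
      intro j
      by_cases h : j = i
      · subst h; rw [Function.update_self]; rfl
      · rw [Function.update_of_ne h]; exact hs j
    have hy := V_full hs (M := M) y
    rw [V_full hs', V_full hs (M.op i x y), h5]
    congr 1
    funext j
    by_cases h : j = i
    · subst h
      have e1 : (Function.update s j (some (V M y s)) j).get (hs' j) = V M y s :=
        Option.get_of_mem _ (by rw [Option.mem_def, Function.update_self])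
      rw [e1, Function.update_self, hy]
    · have e1 : (Function.update s i (some (V M y s)) j).get (hs' j) = (s j).get (hs j) :=
        Option.get_of_mem _
          (by rw [Option.mem_def, Function.update_of_ne h]
              exact (Option.some_get (hs j)).symm)
      rw [e1, Function.update_of_ne h]
  · rw [V_eq_applyStr h4 h7 (L := (i, y) :: L) (by simp)
      (realiz_update_of_realiz h4 h7 hL hmu i y),
      V_eq_applyStr h4 h7 hL hmu, applyStr_cons]

theorem chi_V_op {M : MengerSg G n} {π : G → G → Prop} (hn : 1 ≤ n)
    (hrefl : ∀ a, π a a)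
    (h4 : ∀ L₁ L₂ : List (Fin n × G), L₁ ≠ [] → L₂ ≠ [] →
      (∀ i, mu M i L₁ = mu M i L₂) → ∀ g, applyStr M g L₁ = applyStr M g L₂)
    (h7 : ∀ L : List (Fin n × G), L ≠ [] → ∀ m : Fin n → G,
      (∀ i, mu M i L = some (m i)) → ∀ x, applyStr M x L = M.sup x m)
    {s : Fin n → Option G} (hs : Realizable M s) (i : Fin n) (x y : G) :
    chiRel M π (V M (M.op i x y) s) (V M y s) := by
  rcases hs with hs | hs | ⟨L, hL, hmu⟩
  · have hsE : s = fun _ => none := funext hs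
    subst hsE
    rw [V_none hn, V_none hn]
    exact chi_applyStr hrefl (L := [(i, y)]) (by simp)
      (i := i) (by rw [mu_cons, if_pos rfl]; rfl) x
  · rw [V_full hs, V_full hs]
    exact chi_applyStr_sup hrefl (L := [(i, y)]) (by simp)
      (i := i) (by rw [mu_cons, if_pos rfl]; rfl) x _
  · rw [V_eq_applyStr h4 h7 hL hmu, V_eq_applyStr h4 h7 hL hmu]
    exact chi_applyStr hrefl (L := (i, y) :: L) (by simp)
      (i := i) (by rw [mu_cons, if_pos rfl]) x

/-! ### π-regularity lemmas -/

theorem pi_applyStr {M : MengerSg G n} {π : G → G → Prop} (hreg : M.LRegular π)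
    (L : List (Fin n × G)) : ∀ {a c : G}, π a c →
    π (M.applyStr a L) (M.applyStr c L) := by
  induction L with
  | nil => intro a c h; exact h
  | cons p rest ih => intro a c h; exact ih ((hreg _ _ h).2 p.1 p.2)

theorem pi_V {M : MengerSg G n} {π : G → G → Prop} (hreg : M.LRegular π)
    {a c : G} (h : π a c) (s : Fin n → Option G) : π (V M a s) (V M c s) := by
  unfold V
  split
  · exact (hreg _ _ h).1 _
  · split
    · exact pi_applyStr hreg _ h
    · exact h

/-! ### The canonical representation -/

/-- First projection of the distinguished coordinate. -/
def tup1 (hn : 1 ≤ n) (aa : Fin n → G × Option G) : G := (aa ⟨0, hn⟩).1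

/-- The partial μ-vector of a tuple. -/
def tup2 (aa : Fin n → G × Option G) : Fin n → Option G := fun i => (aa i).2

/-- Condition for membership in the domain. -/
def Cond (hn : 1 ≤ n) (M : MengerSg G n) (π : G → G → Prop) (g : G)
    (aa : Fin n → G × Option G) : Prop :=
  (∀ i, (aa i).1 = tup1 hn aa) ∧ Realizable M (tup2 aa) ∧
    Rho M π (tup1 hn aa) (V M g (tup2 aa))

open Classical in
/-- The canonical representation of `G` by `n`-place functions on `G × Option G`. -/
noncomputable def RepP (hn : 1 ≤ n) (M : MengerSg G n) (π : G → G → Prop) :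
    G → NPlace (G × Option G) n := fun g aa =>
  if Cond hn M π g aa then some (tup1 hn aa, some (V M g (tup2 aa))) else none

theorem RepP_isSome_iff {hn : 1 ≤ n} {M : MengerSg G n} {π : G → G → Prop} {g : G}
    {aa : Fin n → G × Option G} :
    (RepP hn M π g aa).isSome ↔ Cond hn M π g aa := by
  unfold RepP
  split
  · next hc => exact iff_of_true rfl hc
  · next hc => exact iff_of_false (by simp) hc

theorem tup1_update {hn : 1 ≤ n} {aa : Fin n → G × Option G} (i : Fin n) (p : G × Option G)
    (hp : p.1 = tup1 hn aa) : tup1 hn (Function.update aa i p) = tup1 hn aa := by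
  unfold tup1
  by_cases h : (⟨0, hn⟩ : Fin n) = i
  · subst h; rw [Function.update_self]; exact hp
  · rw [Function.update_of_ne h]

theorem tup2_update (aa : Fin n → G × Option G) (i : Fin n) (p : G × Option G) :
    tup2 (Function.update aa i p) = Function.update (tup2 aa) i p.2 := by
  funext j
  unfold tup2
  by_cases h : j = i
  · subst h; rw [Function.update_self, Function.update_self]
  · rw [Function.update_of_ne h, Function.update_of_ne h]

theorem tup1_mk (hn : 1 ≤ n) (b : G) (v : Fin n → Option G) :
    tup1 hn (fun i => (b, v i)) = b := rfl

theorem tup2_mk (b : G) (v : Fin n → Option G) :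
    tup2 (fun i : Fin n => (b, v i)) = v := rfl

theorem isRep (hn : 1 ≤ n) {M : MengerSg G n} (hM : M.Representable)
    {π : G → G → Prop} (hrefl : ∀ a, π a a) : M.IsRep (RepP hn M π) := by
  obtain ⟨h4, h5, h6, h7⟩ := hM
  constructor
  · -- superposition law
    intro x y
    funext aa
    by_cases hcr : (∀ i, (aa i).1 = tup1 hn aa) ∧ Realizable M (tup2 aa)
    · by_cases hall : ∀ i, Rho M π (tup1 hn aa) (V M (y i) (tup2 aa))
      · -- all inner functions defined
        have hyi : ∀ i, RepP hn M π (y i) aa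
            = some (tup1 hn aa, some (V M (y i) (tup2 aa))) :=
          fun i => if_pos ⟨hcr.1, hcr.2, hall i⟩
        have hS : ∀ i, (RepP hn M π (y i) aa).isSome := fun i => by
          rw [hyi i]; exact Option.isSome_some
        have hR : superpose (RepP hn M π x) (fun i => RepP hn M π (y i)) aa
            = RepP hn M π x (fun i => (tup1 hn aa, some (V M (y i) (tup2 aa)))) := by
          unfold superpose
          rw [dif_pos hS]
          congr 1
          funext i
          rw [Option.get_of_mem (hS i) (by rw [Option.mem_def, hyi i])]
        rw [hR]
        have hVs : V M (M.sup x y) (tup2 aa)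
            = M.sup x (fun i => V M (y i) (tup2 aa)) := V_sup hn h4 h6 h7 hcr.2 x y
        have hVt : V M x (tup2 (fun i => (tup1 hn aa, some (V M (y i) (tup2 aa)))))
            = M.sup x (fun i => V M (y i) (tup2 aa)) := by
          rw [tup2_mk, V_full (s := fun i => some (V M (y i) (tup2 aa)))
            (fun i => Option.isSome_some)]
          rfl
        unfold RepP
        by_cases hx : Rho M π (tup1 hn aa) (M.sup x (fun i => V M (y i) (tup2 aa)))
        · rw [if_pos ⟨hcr.1, hcr.2, by rw [hVs]; exact hx⟩,
            if_pos ⟨fun i => rfl, Or.inr (Or.inl fun i => rfl), by rw [hVt]; exact hx⟩]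
          rw [Option.some_inj, Prod.mk.injEq]
          exact ⟨rfl, by rw [hVs, hVt]⟩
        · rw [if_neg, if_neg]
          · intro hc
            exact hx (by rw [← hVt]; exact hc.2.2)
          · intro hc
            exact hx (by rw [← hVs]; exact hc.2.2)
      · -- some inner function undefined
        push_neg at hall
        obtain ⟨i, hi⟩ := hall
        have hnone : RepP hn M π (y i) aa = none :=
          if_neg fun hc => hi hc.2.2
        have hR : superpose (RepP hn M π x) (fun i => RepP hn M π (y i)) aa = none := by
          unfold superpose
          rw [dif_neg]
          intro hAll
          have := hAll i
          simp only [hnone, Option.isSome_none] at this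
          exact Bool.noConfusion this
        rw [hR]
        refine if_neg fun hc => hi ?_
        have := hc.2.2
        rw [V_sup hn h4 h6 h7 hcr.2 x y] at this
        exact rho_chi this (chi_sup hrefl x _ i)
    · -- tuple not admissible at all
      have hR : superpose (RepP hn M π x) (fun i => RepP hn M π (y i)) aa = none := by
        unfold superpose
        rw [dif_neg]
        intro hAll
        have h0 : RepP hn M π (y ⟨0, hn⟩) aa = none :=
          if_neg fun hc => hcr ⟨hc.1, hc.2.1⟩
        have := hAll ⟨0, hn⟩
        simp only [h0, Option.isSome_none] at this
        exact Bool.noConfusion this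
      rw [hR]
      exact if_neg fun hc => hcr ⟨hc.1, hc.2.1⟩
  · -- composition law
    intro i x y
    funext aa
    show RepP hn M π (M.op i x y) aa
      = (RepP hn M π y aa).bind fun b => RepP hn M π x (Function.update aa i b)
    by_cases hcr : (∀ i, (aa i).1 = tup1 hn aa) ∧ Realizable M (tup2 aa)
    · by_cases hy : Rho M π (tup1 hn aa) (V M y (tup2 aa))
      · have hyv : RepP hn M π y aa = some (tup1 hn aa, some (V M y (tup2 aa))) :=
          if_pos ⟨hcr.1, hcr.2, hy⟩
        rw [hyv, Option.bind_some]
        have ht1 : tup1 hn (Function.update aa i (tup1 hn aa, some (V M y (tup2 aa))))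
            = tup1 hn aa := tup1_update i _ rfl
        have ht2 : tup2 (Function.update aa i (tup1 hn aa, some (V M y (tup2 aa))))
            = Function.update (tup2 aa) i (some (V M y (tup2 aa))) := tup2_update aa i _
        have hVu : V M x (tup2 (Function.update aa i (tup1 hn aa, some (V M y (tup2 aa)))))
            = V M (M.op i x y) (tup2 aa) := by
          rw [ht2]
          exact V_update hn h4 h5 h7 hcr.2 i x y
        have hcons : ∀ j, (Function.update aa i (tup1 hn aa, some (V M y (tup2 aa))) j).1
            = tup1 hn (Function.update aa i (tup1 hn aa, some (V M y (tup2 aa)))) := by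
          intro j
          rw [ht1]
          by_cases h : j = i
          · subst h; rw [Function.update_self]
          · rw [Function.update_of_ne h]; exact hcr.1 j
        have hreal : Realizable M (tup2 (Function.update aa i
            (tup1 hn aa, some (V M y (tup2 aa))))) := by
          rw [ht2]
          exact realizable_update hn h4 h7 hcr.2 i y
        unfold RepP
        by_cases hx : Rho M π (tup1 hn aa) (V M (M.op i x y) (tup2 aa))
        · rw [if_pos ⟨hcr.1, hcr.2, hx⟩,
            if_pos ⟨hcons, hreal, by rw [ht1, hVu]; exact hx⟩]
          rw [Option.some_inj, Prod.mk.injEq]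
          exact ⟨ht1.symm, by rw [hVu]⟩
        · rw [if_neg fun hc => hx hc.2.2, if_neg]
          intro hc
          have h22 := hc.2.2
          rw [ht1, hVu] at h22
          exact hx h22
      · have hyv : RepP hn M π y aa = none := if_neg fun hc => hy hc.2.2
        rw [hyv, Option.bind_none]
        refine if_neg fun hc => hy ?_
        exact rho_chi hc.2.2 (chi_V_op hn hrefl h4 h7 hcr.2 i x y)
    · have hyv : RepP hn M π y aa = none := if_neg fun hc => hcr ⟨hc.1, hc.2.1⟩
      rw [hyv, Option.bind_none]
      exact if_neg fun hc => hcr ⟨hc.1, hc.2.1⟩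

theorem RepP_const_isSome (hn : 1 ≤ n) (M : MengerSg G n) (π : G → G → Prop)
    (g b : G) :
    (RepP hn M π g (fun _ => (b, (none : Option G)))).isSome ↔ Rho M π b g := by
  rw [RepP_isSome_iff]
  have hV : V M g (tup2 (fun _ : Fin n => (b, (none : Option G)))) = g := V_none hn M g
  constructor
  · rintro ⟨-, -, h3⟩
    rw [hV] at h3
    exact h3
  · intro hb
    exact ⟨fun i => rfl, Or.inl fun i => rfl, by rw [hV]; exact hb⟩

theorem construct (hn : 1 ≤ n) (M : MengerSg G n) (hM : M.Representable)
    (π : G → G → Prop) (hEq : Equivalence π) (hreg : M.LRegular π)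
    (hchi : ∀ a b, chiRel M π a b → chiRel M π b a → π a b) :
    ∃ (A : Type u) (P : G → NPlace A n), M.IsRep P ∧ Function.Injective P ∧
      ∀ g₁ g₂, π g₁ g₂ ↔ pdom (P g₁) = pdom (P g₂) := by
  refine ⟨G × Option G, RepP hn M π, isRep hn hM hEq.refl, ?_, ?_⟩
  · -- injectivity
    intro g₁ g₂ hg
    have hV1 : V M g₁ (tup2 (fun _ : Fin n => (g₁, (none : Option G)))) = g₁ :=
      V_none hn M g₁
    have hV2 : V M g₂ (tup2 (fun _ : Fin n => (g₁, (none : Option G)))) = g₂ :=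
      V_none hn M g₂
    have h1 : RepP hn M π g₁ (fun _ => (g₁, none)) = some (g₁, some g₁) := by
      unfold RepP
      rw [if_pos ⟨fun i => rfl, Or.inl fun i => rfl, by rw [hV1]; exact rho_refl M π g₁⟩]
      rw [Option.some_inj, Prod.mk.injEq]
      exact ⟨rfl, by rw [hV1]⟩
    have h2 : RepP hn M π g₂ (fun _ => (g₁, none)) = some (g₁, some g₁) :=
      (congrFun hg (fun _ => (g₁, none))).symm.trans h1
    unfold RepP at h2
    split at h2
    · next hc =>
      rw [Option.some_inj, Prod.mk.injEq] at h2
      have := h2.2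
      rw [hV2] at this
      exact (Option.some_inj.1 this).symm
    · simp at h2
  · -- domain characterization
    intro g₁ g₂
    constructor
    · intro h
      ext aa
      simp only [pdom, Set.mem_setOf_eq]
      rw [RepP_isSome_iff, RepP_isSome_iff]
      have hv := pi_V hreg h (tup2 aa)
      constructor
      · rintro ⟨a, b, c⟩; exact ⟨a, b, rho_pi c hv⟩
      · rintro ⟨a, b, c⟩; exact ⟨a, b, rho_pi c (hEq.symm hv)⟩
    · intro h
      have key : ∀ b : G, Rho M π b g₁ ↔ Rho M π b g₂ := by
        intro b
        have h' := Set.ext_iff.mp h (fun _ => (b, (none : Option G)))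
        simp only [pdom, Set.mem_setOf_eq] at h'
        rw [RepP_const_isSome hn M π g₁ b, RepP_const_isSome hn M π g₂ b] at h'
        exact h'
      have k1 : Rho M π g₁ g₂ := (key g₁).1 (rho_refl M π g₁)
      have k2 : Rho M π g₂ g₁ := (key g₂).2 (rho_refl M π g₂)
      rcases k1 with k1 | hk
      · rcases k2 with k2 | hk
        · exact hchi _ _ k1 k2
        · rw [hk]; exact hEq.refl g₁
      · rw [hk]; exact hEq.refl g₂

/-! ### Necessity -/

theorem pdom_superpose_subset {A : Type u} (f : NPlace A n) (g : Fin n → NPlace A n)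
    (i : Fin n) : pdom (superpose f g) ⊆ pdom (g i) := by
  intro a ha
  simp only [pdom, Set.mem_setOf_eq, superpose] at ha ⊢
  split at ha
  · next h => exact h i
  · exact Bool.noConfusion ha

theorem pdom_superpose_mono {A : Type u} {f f' : NPlace A n}
    (h : pdom f ⊆ pdom f') (g : Fin n → NPlace A n) :
    pdom (superpose f g) ⊆ pdom (superpose f' g) := by
  intro a ha
  simp only [pdom, Set.mem_setOf_eq, superpose] at ha ⊢
  split at ha
  · next hh => rw [dif_pos hh]; exact h ha
  · exact Bool.noConfusion ha

theorem pdom_opc_subset {A : Type u} (i : Fin n) (f g : NPlace A n) :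
    pdom (opc i f g) ⊆ pdom g := by
  intro a ha
  simp only [pdom, Set.mem_setOf_eq, opc] at ha ⊢
  cases hg : g a with
  | none => rw [hg] at ha; exact Bool.noConfusion ha
  | some b => rfl

theorem pdom_opc_mono {A : Type u} (i : Fin n) {f f' : NPlace A n}
    (h : pdom f ⊆ pdom f') (g : NPlace A n) :
    pdom (opc i f g) ⊆ pdom (opc i f' g) := by
  intro a ha
  simp only [pdom, Set.mem_setOf_eq, opc] at ha ⊢
  cases hg : g a with
  | none => rw [hg] at ha; exact Bool.noConfusion ha
  | some b =>
    rw [hg] at ha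
    rw [Option.bind_some] at ha ⊢
    exact h ha

theorem dom_transl {A : Type u} {M : MengerSg G n} {P : G → NPlace A n}
    (hP1 : ∀ (x : G) (y : Fin n → G), P (M.sup x y) = superpose (P x) fun i => P (y i))
    {t : G → G} (ht : IsTransl M t) (x : G) : pdom (P (t x)) ⊆ pdom (P x) := by
  induction ht with
  | id => exact subset_rfl
  | step t' ht' i a b ih =>
    rw [hP1]
    refine (pdom_superpose_subset _ _ i).trans ?_
    rw [Function.update_self]
    exact ih

theorem dom_applyStr_mono {A : Type u} {M : MengerSg G n} {P : G → NPlace A n}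
    (hP2 : ∀ (i : Fin n) (x y : G), P (M.op i x y) = opc i (P x) (P y))
    (L : List (Fin n × G)) : ∀ {u v : G}, pdom (P u) ⊆ pdom (P v) →
    pdom (P (M.applyStr u L)) ⊆ pdom (P (M.applyStr v L)) := by
  induction L with
  | nil => intro u v h; exact h
  | cons p rest ih =>
    intro u v h
    rw [applyStr_cons, applyStr_cons]
    refine ih ?_
    rw [hP2, hP2]
    exact pdom_opc_mono _ h _

theorem dom_mu {A : Type u} {M : MengerSg G n} {P : G → NPlace A n}
    (hP2 : ∀ (i : Fin n) (x y : G), P (M.op i x y) = opc i (P x) (P y))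
    (L : List (Fin n × G)) : ∀ {i : Fin n} {m : G}, M.mu i L = some m →
    ∀ x, pdom (P (M.applyStr x L)) ⊆ pdom (P m) := by
  induction L with
  | nil => intro i m hmu; simp [mu] at hmu
  | cons p rest ih =>
    intro i m hmu x
    rw [mu_cons] at hmu
    rw [applyStr_cons]
    split at hmu
    · next hpi =>
      obtain rfl : M.applyStr p.2 rest = m := Option.some_inj.1 hmu
      refine dom_applyStr_mono hP2 rest ?_
      rw [hP2]
      exact pdom_opc_subset _ _ _
    · next hpi => exact ih hmu (M.op p.1 x p.2)

theorem necess {M : MengerSg G n} {π : G → G → Prop} {A : Type u}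
    {P : G → NPlace A n} (hP : M.IsRep P)
    (hiff : ∀ g₁ g₂, π g₁ g₂ ↔ pdom (P g₁) = pdom (P g₂)) :
    Equivalence π ∧ M.LRegular π ∧
      ∀ a b, chiRel M π a b → chiRel M π b a → π a b := by
  obtain ⟨hP1, hP2⟩ := hP
  refine ⟨⟨fun x => (hiff x x).2 rfl,
    fun h => (hiff _ _).2 ((hiff _ _).1 h).symm,
    fun h1 h2 => (hiff _ _).2 (((hiff _ _).1 h1).trans ((hiff _ _).1 h2))⟩, ?_, ?_⟩
  · intro x y h
    have hd := (hiff x y).1 h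
    constructor
    · intro z
      refine (hiff _ _).2 ?_
      rw [hP1, hP1]
      exact Set.Subset.antisymm
        (pdom_superpose_mono (by rw [hd]) _)
        (pdom_superpose_mono (by rw [hd]) _)
    · intro i z
      refine (hiff _ _).2 ?_
      rw [hP2, hP2]
      exact Set.Subset.antisymm
        (pdom_opc_mono i (by rw [hd]) _)
        (pdom_opc_mono i (by rw [hd]) _)
  · have hbase : ∀ a c,
        (Relation.Comp (Relation.Comp π (delta1 M)) fun a b => delta2 M a b ∨ a = b) a c →
        pdom (P a) ⊆ pdom (P c) := by
      rintro a c ⟨b', ⟨d, hπ, t, ht, hdt⟩, h2⟩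
      have h1 : pdom (P a) ⊆ pdom (P b') := by
        rw [(hiff a d).1 hπ, hdt]
        exact dom_transl hP1 ht b'
      rcases h2 with h2 | rfl
      · obtain ⟨x, L, i, m, hL, hmu, hc | ⟨z, hz1, hz2⟩⟩ := h2
        · obtain ⟨hb', hm⟩ := hc
          subst hb'; subst hm
          exact h1.trans (dom_mu hP2 L hmu x)
        · subst hz1; subst hz2
          refine h1.trans ?_
          rw [hP1, hP1]
          exact pdom_superpose_mono (dom_mu hP2 L hmu x) _
      · exact h1
    have hmono : ∀ a c, chiRel M π a c → pdom (P a) ⊆ pdom (P c) := by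
      intro a c h
      induction h with
      | single h => exact hbase _ _ h
      | tail h1 h2 ih => exact ih.trans (hbase _ _ h2)
    intro a c h1 h2
    exact (hiff a c).2 (Set.Subset.antisymm (hmono _ _ h1) (hmono _ _ h2))

end MengerSg

open MengerSg

/-- Theorem 6: a single relation π. -/
theorem theorem6 {G : Type u} {n : ℕ} (hn : 1 ≤ n)
    (M : MengerSg G n) (hM : M.Representable) (π : G → G → Prop) :
    ((∃ (A : Type u) (P : G → NPlace A n), M.IsRep P ∧
        ∀ g₁ g₂, π g₁ g₂ ↔ pdom (P g₁) = pdom (P g₂)) ↔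
      (Equivalence π ∧ M.LRegular π ∧
        ∀ a b, chiRel M π a b → chiRel M π b a → π a b)) ∧
    ((∃ (A : Type u) (P : G → NPlace A n), M.IsRep P ∧ Function.Injective P ∧
        ∀ g₁ g₂, π g₁ g₂ ↔ pdom (P g₁) = pdom (P g₂)) ↔
      (Equivalence π ∧ M.LRegular π ∧
        ∀ a b, chiRel M π a b → chiRel M π b a → π a b)) := by
  constructor
  · constructor
    · rintro ⟨A, P, hP, hiff⟩
      exact necess hP hiff
    · rintro ⟨hEq, hreg, hchi⟩
      obtain ⟨A, P, hP, -, hiff⟩ := construct hn M hM π hEq hreg hchi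
      exact ⟨A, P, hP, hiff⟩
  · constructor
    · rintro ⟨A, P, hP, -, hiff⟩
      exact necess hP hiff
    · rintro ⟨hEq, hreg, hchi⟩
      exact construct hn M hM π hEq hreg hchi
end

section
/- Proposition 4: Let G be a representable Menger (2,n)-semigroup and π an l-regular equivalence relation on G. Then χ(π) is an l-regular and v-negative quasi-order containing π, and χ(π) is the least such relation: χ(π) ⊆ χ for every l-regular and v-negative quasi-order χ on G with π ⊆ χ. -/
universe u

open MengerSg

namespace MengerSg

variable {G : Type u} {n : ℕ}

lemma applyStr_concat (M : MengerSg G n) (x : G) (L : List (Fin n × G)) (p : Fin n × G) :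
    applyStr M x (L ++ [p]) = M.op p.1 (applyStr M x L) p.2 := by
  simp [applyStr, List.foldl_append]

lemma mu_concat (M : MengerSg G n) {j : Fin n} {L : List (Fin n × G)} {m : G}
    (h : mu M j L = some m) (p : Fin n × G) :
    mu M j (L ++ [p]) = some (M.op p.1 m p.2) := by
  induction L with
  | nil => simp [mu] at h
  | cons q rest ih =>
    by_cases hq : q.1 = j
    · simp only [mu, hq, if_true, Option.some.injEq] at h
      simp only [List.cons_append, mu, hq, if_true, Option.some.injEq]
      rw [← h]
      exact applyStr_concat M q.2 rest p
    · simp only [mu, hq, if_false] at h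
      simpa only [List.cons_append, mu, hq, if_false] using ih h

lemma supTransl (M : MengerSg G n) {t : G → G} (ht : IsTransl M t) (z : Fin n → G) :
    ∃ t', IsTransl M t' ∧ ∀ x, M.sup (t x) z = t' (M.sup x z) := by
  induction ht with
  | id => exact ⟨id, .id, fun x => rfl⟩
  | step t₀ ht₀ i a b ih =>
    obtain ⟨t', ht', he⟩ := ih
    refine ⟨fun w => M.sup a (Function.update (fun j => M.sup (b j) z) i (t' w)),
      .step t' ht' i a _, fun x => ?_⟩
    rw [M.superassoc]
    congr 1
    funext j
    by_cases hj : j = i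
    · subst hj; simp [he x]
    · simp [Function.update_of_ne hj]

lemma opTransl (M : MengerSg G n)
    (h6 : ∀ (i : Fin n) (x : G) (y : Fin n → G) (z : G),
      M.op i (M.sup x y) z = M.sup x fun j => M.op i (y j) z)
    {t : G → G} (ht : IsTransl M t) (i : Fin n) (z : G) :
    ∃ t', IsTransl M t' ∧ ∀ x, M.op i (t x) z = t' (M.op i x z) := by
  induction ht with
  | id => exact ⟨id, .id, fun x => rfl⟩
  | step t₀ ht₀ k a b ih =>
    obtain ⟨t', ht', he⟩ := ih
    refine ⟨fun w => M.sup a (Function.update (fun j => M.op i (b j) z) k (t' w)),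
      .step t' ht' k a _, fun x => ?_⟩
    rw [h6]
    congr 1
    funext j
    by_cases hj : j = k
    · subst hj; simp [he x]
    · simp [Function.update_of_ne hj]

lemma delta2_sup (M : MengerSg G n) {d b : G} (h : delta2 M d b) (z : Fin n → G) :
    delta2 M (M.sup d z) (M.sup b z) := by
  obtain ⟨x, L, i, m, hL, hmu, hcase⟩ := h
  refine ⟨x, L, i, m, hL, hmu, Or.inr ?_⟩
  rcases hcase with ⟨h1, h2⟩ | ⟨w, h1, h2⟩
  · exact ⟨z, by rw [h1], by rw [h2]⟩
  · exact ⟨fun j => M.sup (w j) z, by rw [h1, M.superassoc], by rw [h2, M.superassoc]⟩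

lemma delta2_op (M : MengerSg G n)
    (h6 : ∀ (i : Fin n) (x : G) (y : Fin n → G) (z : G),
      M.op i (M.sup x y) z = M.sup x fun j => M.op i (y j) z)
    {d b : G} (h : delta2 M d b) (i : Fin n) (z : G) :
    delta2 M (M.op i d z) (M.op i b z) := by
  obtain ⟨x, L, j, m, hL, hmu, hcase⟩ := h
  rcases hcase with ⟨h1, h2⟩ | ⟨w, h1, h2⟩
  · refine ⟨x, L ++ [(i, z)], j, M.op i m z, by simp, mu_concat M hmu _,
      Or.inl ⟨?_, by rw [h2]⟩⟩
    rw [h1, applyStr_concat]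
  · refine ⟨x, L, j, m, hL, hmu, Or.inr ⟨fun k => M.op i (w k) z, ?_, ?_⟩⟩
    · rw [h1, h6]
    · rw [h2, h6]

end MengerSg


/-- Proposition 4: χ(π) is the least l-regular and v-negative quasi-order containing π. -/
theorem prop4 {G : Type u} {n : ℕ} (hn : 1 ≤ n)
    (M : MengerSg G n) (hM : M.Representable) (π : G → G → Prop)
    (hπ : Equivalence π) (hπreg : M.LRegular π) :
    (QuasiOrder (chiRel M π) ∧ M.LRegular (chiRel M π) ∧ M.VNegative (chiRel M π) ∧
        ∀ a b, π a b → chiRel M π a b) ∧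
      ∀ χ : G → G → Prop, QuasiOrder χ → M.LRegular χ → M.VNegative χ →
        (∀ a b, π a b → χ a b) → ∀ a b, chiRel M π a b → χ a b := by

  obtain ⟨h4, h5, h6, h7⟩ := hM
  set R : G → G → Prop :=
    Relation.Comp (Relation.Comp π (delta1 M)) (fun a b => delta2 M a b ∨ a = b) with hR
  have hchi : chiRel M π = Relation.TransGen R := rfl
  have baseRefl : ∀ a, R a a := fun a =>
    ⟨a, ⟨a, hπ.refl a, id, .id, rfl⟩, Or.inr rfl⟩
  have baseSup : ∀ a b (z : Fin n → G), R a b → R (M.sup a z) (M.sup b z) := by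
    rintro a b z ⟨d, ⟨c, hac, t, ht, rfl⟩, hdb⟩
    obtain ⟨t', ht', he⟩ := supTransl M ht z
    refine ⟨M.sup d z, ⟨M.sup (t d) z, (hπreg _ _ hac).1 z, t', ht', he d⟩, ?_⟩
    rcases hdb with h | rfl
    · exact Or.inl (delta2_sup M h z)
    · exact Or.inr rfl
  have baseOp : ∀ a b (i : Fin n) (z : G), R a b → R (M.op i a z) (M.op i b z) := by
    rintro a b i z ⟨d, ⟨c, hac, t, ht, rfl⟩, hdb⟩
    obtain ⟨t', ht', he⟩ := opTransl M h6 ht i z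
    refine ⟨M.op i d z, ⟨M.op i (t d) z, (hπreg _ _ hac).2 i z, t', ht', he d⟩, ?_⟩
    rcases hdb with h | rfl
    · exact Or.inl (delta2_op M h6 h i z)
    · exact Or.inr rfl
  constructor
  · refine ⟨⟨fun a => .single (baseRefl a), fun _ _ _ => Relation.TransGen.trans⟩, ?_, ?_, ?_⟩
    · intro a b hab
      constructor
      · intro z
        rw [hchi] at hab ⊢
        induction hab with
        | single h => exact .single (baseSup _ _ z h)
        | tail h1 h2 ih => exact .tail ih (baseSup _ _ z h2)
      · intro i z
        rw [hchi] at hab ⊢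
        induction hab with
        | single h => exact .single (baseOp _ _ i z h)
        | tail h1 h2 ih => exact .tail ih (baseOp _ _ i z h2)
    · constructor
      · intro x y i
        refine Relation.TransGen.single
          ⟨y i, ⟨M.sup x y, hπ.refl _,
            fun w => M.sup x (Function.update y i (id w)), .step id .id i x y, ?_⟩,
            Or.inr rfl⟩
        simp
      · intro x L hL j m hmu
        exact Relation.TransGen.single
          ⟨applyStr M x L, ⟨applyStr M x L, hπ.refl _, id, .id, rfl⟩,
            Or.inl ⟨x, L, j, m, hL, hmu, Or.inl ⟨rfl, rfl⟩⟩⟩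
    · intro a b hab
      exact Relation.TransGen.single ⟨b, ⟨b, hab, id, .id, rfl⟩, Or.inr rfl⟩
  · rintro χ ⟨hrefl, htrans⟩ hχreg hχneg hπχ a b h
    have translχ : ∀ t, IsTransl M t → ∀ x, χ (t x) x := by
      intro t ht
      induction ht with
      | id => exact fun x => hrefl x
      | step t₀ ht₀ i a b ih =>
        intro x
        have h1 := hχneg.1 a (Function.update b i (t₀ x)) i
        rw [Function.update_self] at h1
        exact htrans h1 (ih x)
    have d2χ : ∀ a b, delta2 M a b → χ a b := by
      rintro a b ⟨x, L, i, m, hL, hmu, ⟨rfl, rfl⟩ | ⟨z, rfl, rfl⟩⟩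
      · exact hχneg.2 x L hL i _ hmu
      · exact (hχreg _ _ (hχneg.2 x L hL i _ hmu)).1 z
    have baseχ : ∀ a b, R a b → χ a b := by
      rintro a b ⟨d, ⟨c, hac, t, ht, rfl⟩, hdb⟩
      refine htrans (hπχ _ _ hac) (htrans (translχ t ht d) ?_)
      rcases hdb with hd | rfl
      · exact d2χ _ _ hd
      · exact hrefl _
    rw [hchi] at h
    induction h with
    | single h => exact baseχ _ _ h
    | tail h1 h2 ih => exact htrans ih (baseχ _ _ h2)
end

section
/- Let G be a representable Menger (2,n)-semigroup. If a binary relation ρ on G contains δ₁ and δ₂, then ρ is v-negative; conversely, every l-regular, v-negative quasi-order on G contains both δ₁ and δ₂. -/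
universe u

open MengerSg

/-- A relation containing δ₁ and δ₂ is v-negative; conversely, every l-regular and
v-negative quasi-order contains both δ₁ and δ₂. -/
theorem vNegative_iff_contains_deltas {G : Type u} {n : ℕ} (hn : 1 ≤ n)
    (M : MengerSg G n) (hM : M.Representable) :
    (∀ ρ : G → G → Prop, (∀ a b, delta1 M a b → ρ a b) →
        (∀ a b, delta2 M a b → ρ a b) → M.VNegative ρ) ∧
      ∀ χ : G → G → Prop, QuasiOrder χ → M.LRegular χ → M.VNegative χ →
        (∀ a b, delta1 M a b → χ a b) ∧ (∀ a b, delta2 M a b → χ a b) := by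
  constructor
  · intro ρ h1 h2
    constructor
    · intro x y i
      apply h1
      refine ⟨fun z => M.sup x (Function.update y i z),
        IsTransl.step _root_.id IsTransl.id i x y, ?_⟩
      simp
    · intro x L hL j m hm
      exact h2 _ _ ⟨x, L, j, m, hL, hm, Or.inl ⟨rfl, rfl⟩⟩
  · intro χ hq hl hv
    constructor
    · intro a b ⟨t, ht, hab⟩
      subst hab
      induction ht with
      | id => exact hq.1 b
      | step t ht i c bs ih =>
        refine hq.2 ?_ ih
        have := hv.1 c (Function.update bs i (t b)) i
        simpa using this
    · rintro a b ⟨x, L, i, m, hL, hm, h | ⟨z, ha, hb⟩⟩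
      · obtain ⟨ha, hb⟩ := h
        subst ha; subst hb
        exact hv.2 x L hL i _ hm
      · subst ha; subst hb
        exact ((hl _ _ (hv.2 x L hL i _ hm)).1 z)
end

section
/- Let G be a representable Menger (2,n)-semigroup. Then δ₁ is an l-regular quasi-order on G, and δ₂ is an l-regular relation on G. -/
universe u

open MengerSg

namespace MengerSg

variable {G : Type u} {n : ℕ}

theorem IsTransl.comp' {M : MengerSg G n} {t s : G → G} (ht : IsTransl M t)
    (hs : IsTransl M s) : IsTransl M (fun x => t (s x)) := by
  induction ht with
  | id => exact hs
  | step t' ht' i a b ih => exact .step _ ih i a b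

theorem transl_sup (M : MengerSg G n) {t : G → G} (ht : IsTransl M t) (z : Fin n → G) :
    ∃ t', IsTransl M t' ∧ ∀ y, M.sup (t y) z = t' (M.sup y z) := by
  induction ht with
  | id => exact ⟨_root_.id, .id, fun y => rfl⟩
  | step s hs i a b ih =>
    obtain ⟨s', hs', he⟩ := ih
    refine ⟨fun w => M.sup a (Function.update (fun j => M.sup (b j) z) i (s' w)),
      .step s' hs' i a _, fun y => ?_⟩
    rw [M.superassoc]
    congr 1
    funext j
    rcases eq_or_ne j i with rfl | hj
    · simp [he]
    · simp [Function.update_of_ne hj]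

theorem transl_op (M : MengerSg G n)
    (h6 : ∀ (i : Fin n) (x : G) (y : Fin n → G) (z : G),
      M.op i (M.sup x y) z = M.sup x fun j => M.op i (y j) z)
    {t : G → G} (ht : IsTransl M t) (i : Fin n) (z : G) :
    ∃ t', IsTransl M t' ∧ ∀ y, M.op i (t y) z = t' (M.op i y z) := by
  induction ht with
  | id => exact ⟨_root_.id, .id, fun y => rfl⟩
  | step s hs j a b ih =>
    obtain ⟨s', hs', he⟩ := ih
    refine ⟨fun w => M.sup a (Function.update (fun k => M.op i (b k) z) j (s' w)),
      .step s' hs' j a _, fun y => ?_⟩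
    rw [h6]
    congr 1
    funext k
    rcases eq_or_ne k j with rfl | hk
    · simp [he]
    · simp [Function.update_of_ne hk]

theorem applyStr_append (M : MengerSg G n) (x : G) (L L' : List (Fin n × G)) :
    applyStr M x (L ++ L') = applyStr M (applyStr M x L) L' := by
  simp [applyStr, List.foldl_append]

theorem mu_append_some (M : MengerSg G n) (i : Fin n) {L : List (Fin n × G)}
    (L' : List (Fin n × G)) {m : G} (h : mu M i L = some m) :
    mu M i (L ++ L') = some (applyStr M m L') := by
  induction L with
  | nil => simp [mu] at h
  | cons p rest ih =>
    by_cases hp : p.1 = i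
    · rw [mu, if_pos hp] at h
      rw [List.cons_append, mu, if_pos hp, applyStr_append]
      injection h with h
      rw [h]
    · rw [mu, if_neg hp] at h
      rw [List.cons_append, mu, if_neg hp]
      exact ih h

end MengerSg


/-- δ₁ is an l-regular quasi-order, and δ₂ is an l-regular relation. -/
theorem delta1_delta2_lRegular {G : Type u} {n : ℕ} (hn : 1 ≤ n)
    (M : MengerSg G n) (hM : M.Representable) :
    (QuasiOrder (delta1 M) ∧ M.LRegular (delta1 M)) ∧ M.LRegular (delta2 M) := by
  have h6 := hM.2.2.1
  refine ⟨⟨⟨fun g => ⟨_root_.id, .id, rfl⟩, ?_⟩, ?_⟩, ?_⟩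
  · rintro a b c ⟨t, ht, rfl⟩ ⟨s, hs, rfl⟩
    exact ⟨fun x => t (s x), ht.comp' hs, rfl⟩
  · rintro x y ⟨t, ht, rfl⟩
    constructor
    · intro z
      obtain ⟨t', ht', he⟩ := transl_sup M ht z
      exact ⟨t', ht', he y⟩
    · intro i z
      obtain ⟨t', ht', he⟩ := transl_op M h6 ht i z
      exact ⟨t', ht', he y⟩
  · rintro g₁ g₂ ⟨x, L, i, m, hL, hmu, hcase⟩
    constructor
    · intro z
      rcases hcase with ⟨h1, h2⟩ | ⟨w, h1, h2⟩
      · exact ⟨x, L, i, m, hL, hmu, Or.inr ⟨z, by rw [h1], by rw [h2]⟩⟩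
      · exact ⟨x, L, i, m, hL, hmu, Or.inr ⟨fun j => M.sup (w j) z,
          by rw [h1, M.superassoc], by rw [h2, M.superassoc]⟩⟩
    · intro j z
      rcases hcase with ⟨h1, h2⟩ | ⟨w, h1, h2⟩
      · refine ⟨x, L ++ [(j, z)], i, M.op j m z, by simp, mu_append_some M i _ hmu,
          Or.inl ⟨?_, by rw [h2]⟩⟩
        rw [h1, applyStr_append]
        rfl
      · exact ⟨x, L, i, m, hL, hmu, Or.inr ⟨fun k => M.op j (w k) z,
          by rw [h1, h6], by rw [h2, h6]⟩⟩
end
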